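/- arXiv:2211.10621 — 3 statements merged into one kernel-verified Lean document; each statement's English description precedes it below -/
import Mathlib

section
/- Let k ≥ 4 be an integer, x > 1, h a nonzero integer, M ≥ 1, and M' = min(2M, (x/2)^{1/k}). Then Σ_{M < m ≤ M'} e(h(x − m^k)^{1/k}) ≪ |h|^{-1/2} x^{(k-1)/(2k)} M^{(2-k)/2} + |h|^{1/2} x^{(1-k)/(2k)} M^{k/2}, with implied constant depending only on k. -/
open Finset Real

noncomputable section

namespace VdC

noncomputable def vv (δ : ℝ) : ℂ := (Complex.exp (2 * Real.pi * Complex.I * (δ : ℂ)) - 1)⁻¹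

lemma exp_two_pi_sub_one (δ : ℝ) :
    Complex.exp (2 * Real.pi * Complex.I * (δ : ℂ)) - 1
      = Complex.exp (Real.pi * δ * Complex.I) * (2 * Complex.I * (Real.sin (Real.pi * δ) : ℂ)) := by
  have h3 : Complex.exp ((Real.pi * δ : ℂ) * Complex.I)
      * Complex.exp (-(Real.pi * δ : ℂ) * Complex.I) = 1 := by
    rw [← Complex.exp_add, show (Real.pi * δ : ℂ) * Complex.I + -(Real.pi * δ : ℂ) * Complex.I = 0 by ring,
      Complex.exp_zero]
  rw [show (2 * (Real.pi:ℂ) * Complex.I * (δ:ℂ))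
      = (Real.pi * δ : ℂ) * Complex.I + (Real.pi * δ : ℂ) * Complex.I by ring,
    Complex.exp_add, Complex.ofReal_sin, Complex.sin]
  push_cast
  linear_combination (-(Complex.I^2)) * h3
    + (Complex.exp ((Real.pi * δ : ℂ) * Complex.I)^2 - 1) * Complex.I_sq

lemma norm_vv (δ : ℝ) (hs : 0 < Real.sin (Real.pi * δ)) :
    ‖vv δ‖ = 1 / (2 * Real.sin (Real.pi * δ)) := by
  have habs : ‖Complex.sin ((Real.pi:ℂ) * (δ:ℂ))‖ = Real.sin (Real.pi*δ) := by
    rw [← Complex.ofReal_mul, ← Complex.ofReal_sin, Complex.norm_real, Real.norm_eq_abs, abs_of_pos hs]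
  rw [vv, exp_two_pi_sub_one, norm_inv, norm_mul]
  simp [Complex.norm_exp, Complex.norm_real, abs_of_pos hs, habs]

lemma vv_eq (δ : ℝ) (hs : Real.sin (Real.pi * δ) ≠ 0) :
    vv δ = -(1/2 : ℂ) - (Real.cos (Real.pi * δ) / Real.sin (Real.pi * δ) : ℝ) * Complex.I / 2 := by
  have hcast : ((Real.pi * δ : ℝ) : ℂ) = (Real.pi : ℂ) * (δ : ℂ) := by push_cast; ring
  have hsC : Complex.sin ((Real.pi:ℂ) * (δ:ℂ)) ≠ 0 := by
    rw [← hcast, ← Complex.ofReal_sin]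
    exact_mod_cast hs
  have he : Complex.exp ((Real.pi:ℂ) * (δ:ℂ) * Complex.I)
      = Complex.cos ((Real.pi:ℂ) * (δ:ℂ)) + Complex.sin ((Real.pi:ℂ) * (δ:ℂ)) * Complex.I :=
    Complex.exp_mul_I _
  have hp := Complex.sin_sq_add_cos_sq ((Real.pi:ℂ) * (δ:ℂ))
  have hr := mul_inv_cancel₀ hsC
  rw [vv]
  apply inv_eq_of_mul_eq_one_right
  rw [exp_two_pi_sub_one, Complex.ofReal_div, Complex.ofReal_sin, Complex.ofReal_cos, hcast, he,
    div_eq_mul_inv]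
  set A := Complex.cos ((Real.pi:ℂ) * (δ:ℂ))
  set B := Complex.sin ((Real.pi:ℂ) * (δ:ℂ))
  set C := B⁻¹
  linear_combination hp + (A^2 + A*B*Complex.I) * hr
    + (-(B^2) - A^2*C*B - A*C*B^2*Complex.I) * Complex.I_sq

lemma sin_pi_theta_ge (θ : ℝ) (h0 : 0 ≤ θ) (hθ : θ ≤ 1/2) : 2 * θ ≤ Real.sin (Real.pi * θ) := by
  have hpi := Real.pi_pos
  have hconc := strictConcaveOn_sin_Icc.concaveOn
  have h1 : (0:ℝ) ∈ Set.Icc (0:ℝ) Real.pi := Set.mem_Icc.2 ⟨le_refl 0, hpi.le⟩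
  have h2 : Real.pi/2 ∈ Set.Icc (0:ℝ) Real.pi := Set.mem_Icc.2 ⟨by positivity, by linarith⟩
  have key := hconc.2 h1 h2 (show (0:ℝ) ≤ 1 - 2*θ by linarith) (show (0:ℝ) ≤ 2*θ by linarith)
    (show (1 - 2*θ) + 2*θ = 1 by ring)
  simp only [smul_eq_mul, mul_zero, Real.sin_zero, zero_add] at key
  rw [show 2*θ*(Real.pi/2) = Real.pi*θ by ring, Real.sin_pi_div_two] at key
  linarith

lemma abel_id (E v : ℕ → ℂ) (a : ℕ) : ∀ j, (∀ n, a ≤ n → n < a+j+1 → E n = v n * (E (n+1) - E n)) →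
    ∑ n ∈ Finset.Ico a (a+j+1), E n
      = v (a+j) * E (a+j+1) - v a * E a - ∑ i ∈ Finset.Ico a (a+j), (v (i+1) - v i) * E (i+1) := by
  intro j
  induction j with
  | zero =>
    intro hrel
    simp only [Nat.add_zero, Finset.Ico_self, Finset.sum_empty]
    rw [Finset.sum_Ico_succ_top (by omega), Finset.Ico_self, Finset.sum_empty, zero_add]
    linear_combination hrel a le_rfl (by omega)
  | succ j ih =>
    intro hrel
    rw [show a + (j+1) + 1 = (a + j + 1) + 1 by ring]
    rw [Finset.sum_Ico_succ_top (by omega)]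
    rw [ih (fun n h1 h2 => hrel n h1 (by omega))]
    rw [show a + (j+1) = (a + j) + 1 by ring]
    rw [Finset.sum_Ico_succ_top (by omega)]
    linear_combination hrel (a+j+1) (by omega) (by omega)


lemma sin_pi_ge (θ δ : ℝ) (h0 : 0 < θ) (hlo : θ ≤ δ) (hhi : δ ≤ 1 - θ) (hθ : θ ≤ 1/2) :
    Real.sin (Real.pi * θ) ≤ Real.sin (Real.pi * δ) := by
  have hpi := Real.pi_pos
  rcases le_or_gt δ (1/2) with hd | hd
  · apply Real.sin_le_sin_of_le_of_le_pi_div_two (by nlinarith) (by nlinarith) (by nlinarith)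
  · rw [show Real.pi * δ = Real.pi - Real.pi * (1 - δ) by ring, Real.sin_pi_sub]
    apply Real.sin_le_sin_of_le_of_le_pi_div_two (by nlinarith) (by nlinarith) (by nlinarith)

lemma cot_anti {u w : ℝ} (hu : 0 < u) (hw : w < Real.pi) (huw : u ≤ w) (hu' : 0 < Real.sin u)
    (hw' : 0 < Real.sin w) :
    Real.cos w / Real.sin w ≤ Real.cos u / Real.sin u := by
  rw [div_le_div_iff₀ hw' hu']
  have h1 : 0 ≤ Real.sin (w - u) :=
    Real.sin_nonneg_of_nonneg_of_le_pi (by linarith) (by linarith)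
  have h2 := Real.sin_sub w u
  nlinarith

lemma kusmin_landau (θ : ℝ) (hθ0 : 0 < θ) (hθ2 : θ ≤ 1/2)
    (E : ℕ → ℂ) (δ : ℕ → ℝ) (a c : ℕ)
    (hE : ∀ n, a ≤ n → n ≤ c → ‖E n‖ ≤ 1)
    (hrel : ∀ n, a ≤ n → n < c → E (n+1) = E n * Complex.exp (2 * Real.pi * Complex.I * ((δ n : ℝ) : ℂ)))
    (hmono : ∀ n, a ≤ n → n + 1 < c → δ (n+1) ≤ δ n)
    (hlo : ∀ n, a ≤ n → n < c → θ ≤ δ n)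
    (hhi : ∀ n, a ≤ n → n < c → δ n ≤ 1 - θ) :
    ‖∑ n ∈ Finset.Ico a c, E n‖ ≤ 1/θ := by
  have hpi := Real.pi_pos
  rcases le_or_gt c a with hca | hac
  · rw [Finset.Ico_eq_empty (by omega), Finset.sum_empty, norm_zero]
    positivity
  -- positivity facts
  have hsθ : 0 < Real.sin (Real.pi * θ) :=
    Real.sin_pos_of_pos_of_lt_pi (by positivity) (by nlinarith)
  have hsθ2 : 2 * θ ≤ Real.sin (Real.pi * θ) := sin_pi_theta_ge θ hθ0.le hθ2
  have hsn : ∀ n, a ≤ n → n < c → Real.sin (Real.pi * θ) ≤ Real.sin (Real.pi * δ n) := by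
    intro n h1 h2
    exact sin_pi_ge θ (δ n) hθ0 (hlo n h1 h2) (hhi n h1 h2) hθ2
  have hsnpos : ∀ n, a ≤ n → n < c → 0 < Real.sin (Real.pi * δ n) := fun n h1 h2 =>
    lt_of_lt_of_le hsθ (hsn n h1 h2)
  have hnormvv : ∀ n, a ≤ n → n < c → ‖vv (δ n)‖ ≤ 1/(4*θ) := by
    intro n h1 h2
    rw [norm_vv (δ n) (hsnpos n h1 h2)]
    rw [div_le_div_iff₀ (by nlinarith [hsnpos n h1 h2] : (0:ℝ) < 2 * Real.sin (Real.pi * δ n)) (by positivity)]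
    nlinarith [hsn n h1 h2]
  have hrelv : ∀ n, a ≤ n → n < c → E n = vv (δ n) * (E (n+1) - E n) := by
    intro n h1 h2
    have hu : Complex.exp (2 * Real.pi * Complex.I * ((δ n : ℝ) : ℂ)) - 1 ≠ 0 := by
      rw [exp_two_pi_sub_one]
      apply mul_ne_zero (Complex.exp_ne_zero _)
      apply mul_ne_zero (by norm_num [Complex.I_ne_zero])
      exact_mod_cast (hsnpos n h1 h2).ne'
    have h3 : E (n+1) - E n = E n * (Complex.exp (2 * Real.pi * Complex.I * ((δ n : ℝ) : ℂ)) - 1) := by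
      rw [hrel n h1 h2]; ring
    rw [h3, vv]
    rw [← mul_assoc, mul_comm _ (E n), mul_assoc, mul_comm _ (Complex.exp _ - 1), mul_inv_cancel₀ hu, mul_one]
  -- set up Abel
  obtain ⟨j, rfl⟩ : ∃ j, c = a + j + 1 := ⟨c - a - 1, by omega⟩
  have hid := abel_id E (fun n => vv (δ n)) a j hrelv
  rw [hid]
  -- cotangent sequence
  set r : ℕ → ℝ := fun n => Real.cos (Real.pi * δ n) / Real.sin (Real.pi * δ n) with hr
  have hvdiff : ∀ i, a ≤ i → i + 1 < a + j + 1 →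
      ‖vv (δ (i+1)) - vv (δ i)‖ = (r (i+1) - r i)/2 := by
    intro i h1 h2
    rw [vv_eq (δ (i+1)) (hsnpos (i+1) (by omega) (by omega)).ne',
       vv_eq (δ i) (hsnpos i h1 (by omega)).ne']
    have hrge : r i ≤ r (i+1) := by
      apply cot_anti (u := Real.pi * δ (i+1)) (w := Real.pi * δ i)
      · have := hlo (i+1) (by omega) (by omega); nlinarith
      · have := hhi i h1 (by omega); nlinarith
      · have := hmono i h1 (by omega); nlinarith
      · exact hsnpos (i+1) (by omega) (by omega)
      · exact hsnpos i h1 (by omega)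
    have : -(1/2 : ℂ) - ((r (i+1) : ℝ) : ℂ) * Complex.I / 2 - (-(1/2 : ℂ) - ((r i : ℝ) : ℂ) * Complex.I / 2)
        = (((r (i+1) - r i : ℝ)) : ℂ) * (-Complex.I) / 2 := by push_cast; ring
    rw [this]
    rw [norm_div, norm_mul, Complex.norm_real, norm_neg, Complex.norm_I, mul_one]
    simp [abs_of_nonneg (by linarith : (0:ℝ) ≤ r (i+1) - r i)]
  have hrbound : ∀ n, a ≤ n → n < a + j + 1 → |r n| ≤ 1/(2*θ) := by
    intro n h1 h2
    rw [hr, abs_div]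
    rw [div_le_div_iff₀ (by simpa [abs_of_pos (hsnpos n h1 h2)] using hsnpos n h1 h2) (by positivity)]
    have h3 := hsnpos n h1 h2
    have h4 := hsn n h1 h2
    have h5 : |Real.cos (Real.pi * δ n)| ≤ 1 := Real.abs_cos_le_one _
    rw [abs_of_pos h3]
    nlinarith
  -- telescoping
  have htel : ∑ i ∈ Finset.Ico a (a+j), ‖vv (δ (i+1)) - vv (δ i)‖ = (r (a+j) - r a)/2 := by
    have : ∀ i ∈ Finset.Ico a (a+j), ‖vv (δ (i+1)) - vv (δ i)‖ = (fun n => r n / 2) (i+1) - (fun n => r n / 2) i := by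
      intro i hi
      rw [Finset.mem_Ico] at hi
      rw [hvdiff i hi.1 (by omega)]
      ring
    rw [Finset.sum_congr rfl this, Finset.sum_Ico_eq_sub _ (by omega : a ≤ a + j),
      Finset.sum_range_sub (fun n => r n / 2), Finset.sum_range_sub (fun n => r n / 2)]
    ring
  -- put together
  have hb1 : ‖vv (δ (a+j)) * E (a+j+1)‖ ≤ 1/(4*θ) := by
    rw [norm_mul]
    calc ‖vv (δ (a+j))‖ * ‖E (a+j+1)‖ ≤ (1/(4*θ)) * 1 := by
          apply mul_le_mul (hnormvv (a+j) (by omega) (by omega)) (hE (a+j+1) (by omega) le_rfl)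
            (norm_nonneg _) (by positivity)
      _ = 1/(4*θ) := by ring
  have hb2 : ‖vv (δ a) * E a‖ ≤ 1/(4*θ) := by
    rw [norm_mul]
    calc ‖vv (δ a)‖ * ‖E a‖ ≤ (1/(4*θ)) * 1 := by
          apply mul_le_mul (hnormvv a le_rfl (by omega)) (hE a le_rfl (by omega))
            (norm_nonneg _) (by positivity)
      _ = 1/(4*θ) := by ring
  have hb3 : ‖∑ i ∈ Finset.Ico a (a+j), (vv (δ (i+1)) - vv (δ i)) * E (i+1)‖ ≤ 1/(2*θ) := by
    calc ‖∑ i ∈ Finset.Ico a (a+j), (vv (δ (i+1)) - vv (δ i)) * E (i+1)‖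
        ≤ ∑ i ∈ Finset.Ico a (a+j), ‖(vv (δ (i+1)) - vv (δ i)) * E (i+1)‖ := norm_sum_le _ _
      _ ≤ ∑ i ∈ Finset.Ico a (a+j), ‖vv (δ (i+1)) - vv (δ i)‖ := by
          apply Finset.sum_le_sum
          intro i hi
          rw [Finset.mem_Ico] at hi
          rw [norm_mul]
          calc ‖vv (δ (i+1)) - vv (δ i)‖ * ‖E (i+1)‖ ≤ ‖vv (δ (i+1)) - vv (δ i)‖ * 1 :=
                mul_le_mul_of_nonneg_left (hE (i+1) (by omega) (by omega)) (norm_nonneg _)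
            _ = _ := by ring
      _ = (r (a+j) - r a)/2 := htel
      _ ≤ 1/(2*θ) := by
          have h1 := hrbound (a+j) (by omega) (by omega)
          have h2 := hrbound a le_rfl (by omega)
          rw [abs_le] at h1 h2
          have : r (a+j) - r a ≤ 1/(2*θ) + 1/(2*θ) := by linarith [h1.2, h2.1]
          linarith
  calc ‖vv (δ (a+j)) * E (a+j+1) - vv (δ a) * E a - ∑ i ∈ Finset.Ico a (a+j), (vv (δ (i+1)) - vv (δ i)) * E (i+1)‖
      ≤ ‖vv (δ (a+j)) * E (a+j+1) - vv (δ a) * E a‖ + ‖∑ i ∈ Finset.Ico a (a+j), (vv (δ (i+1)) - vv (δ i)) * E (i+1)‖ :=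
        norm_sub_le _ _
    _ ≤ ‖vv (δ (a+j)) * E (a+j+1)‖ + ‖vv (δ a) * E a‖ + ‖∑ i ∈ Finset.Ico a (a+j), (vv (δ (i+1)) - vv (δ i)) * E (i+1)‖ := by
        have := norm_sub_le (vv (δ (a+j)) * E (a+j+1)) (vv (δ a) * E a)
        linarith
    _ ≤ 1/(4*θ) + 1/(4*θ) + 1/(2*θ) := by linarith
    _ = 1/θ := by field_simp; ring


lemma blocks (θ lam1 : ℝ) (hθ0 : 0 < θ) (hθ2 : θ ≤ 1/2) (hl0 : 0 < lam1)
    (E : ℕ → ℂ) (δ : ℕ → ℝ) :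
    ∀ (N a b : ℕ), b - a ≤ N → a < b →
    (∀ n, a ≤ n → n ≤ b → ‖E n‖ ≤ 1) →
    (∀ n, a ≤ n → n < b → E (n+1) = E n * Complex.exp (2 * Real.pi * Complex.I * ((δ n : ℝ) : ℂ))) →
    (∀ n, a ≤ n → n + 1 < b → lam1 ≤ δ n - δ (n+1)) →
    ‖∑ n ∈ Finset.Ico a b, E n‖
      ≤ ((⌊δ a + θ⌋ : ℝ) - (⌊δ (b-1) + θ⌋ : ℝ) + 1) * (1/θ + 2*θ/lam1 + 1) := by
  classical
  intro N
  induction N with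
  | zero => intro a b h1 h2; omega
  | succ N ih =>
    intro a b hN hab hE hrel hstep
    set P : ℝ := 1/θ + 2*θ/lam1 + 1 with hPdef
    have hP : 0 < P := by positivity
    -- monotonicity helpers
    have hanti : ∀ m n, a ≤ m → m ≤ n → (n < b → δ n ≤ δ m) := by
      intro m n h1 h2
      induction n, h2 using Nat.le_induction with
      | base => intro _; exact le_rfl
      | succ n hmn ihn =>
        intro h3
        have hs := hstep n (le_trans h1 hmn) (by omega)
        have := ihn (by omega)
        linarith
    have hdrop : ∀ m n, a ≤ m → m ≤ n → (n < b → lam1 * ((n:ℝ) - (m:ℝ)) ≤ δ m - δ n) := by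
      intro m n h1 h2
      induction n, h2 using Nat.le_induction with
      | base => intro _; simp
      | succ n hmn ihn =>
        intro h3
        have hs := hstep n (le_trans h1 hmn) (by omega)
        have := ihn (by omega)
        push_cast
        push_cast at this
        nlinarith
    -- floor facts
    set ν : ℤ := ⌊δ a + θ⌋ with hνdef
    have hν1 : (ν:ℝ) ≤ δ a + θ := Int.floor_le _
    have hν2 : δ a + θ < (ν:ℝ) + 1 := Int.lt_floor_add_one _
    have hFa : ⌊δ (b-1) + θ⌋ ≤ ν := by
      apply Int.floor_le_floor
      have := hanti a (b-1) le_rfl (by omega) (by omega)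
      linarith
    -- first split point
    set Q : ℕ → Prop := fun n => a ≤ n ∧ (b ≤ n ∨ δ n < (ν:ℝ) + θ) with hQdef
    have hQb : Q b := ⟨hab.le, Or.inl le_rfl⟩
    set m : ℕ := Nat.find ⟨b, hQb⟩ with hmdef
    have hmQ : Q m := Nat.find_spec ⟨b, hQb⟩
    have hmb : m ≤ b := Nat.find_le hQb
    have hma : a ≤ m := hmQ.1
    have hgood : ∀ n, a ≤ n → n < m → n < b ∧ (ν:ℝ) + θ ≤ δ n := by
      intro n h1 h2
      have := Nat.find_min ⟨b, hQb⟩ h2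
      simp only [hQdef] at this
      push_neg at this
      obtain ⟨h3, h4⟩ := this h1
      exact ⟨by omega, h4⟩
    -- KL on [a, m)
    have hKL : ‖∑ n ∈ Finset.Ico a m, E n‖ ≤ 1/θ := by
      apply kusmin_landau θ hθ0 hθ2 E (fun n => δ n - (ν:ℝ)) a m
      · intro n h1 h2; exact hE n h1 (by omega)
      · intro n h1 h2
        rw [hrel n h1 (by omega)]
        congr 1
        rw [show (2*(Real.pi:ℂ)*Complex.I*((δ n - (ν:ℝ) : ℝ):ℂ))
            = 2*(Real.pi:ℂ)*Complex.I*((δ n : ℝ):ℂ) + (-ν:ℤ)*(2*(Real.pi:ℂ)*Complex.I) by push_cast; ring,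
          Complex.exp_add, Complex.exp_int_mul_two_pi_mul_I, mul_one]
      · intro n h1 h2
        have := hstep n h1 (by omega)
        show δ (n+1) - (ν:ℝ) ≤ δ n - (ν:ℝ)
        linarith
      · intro n h1 h2
        have := (hgood n h1 h2).2
        show θ ≤ δ n - (ν:ℝ)
        linarith
      · intro n h1 h2
        have h3 := hanti a n le_rfl h1 (by omega)
        show δ n - (ν:ℝ) ≤ 1 - θ
        linarith
    -- second split point
    set R : ℕ → Prop := fun n => m ≤ n ∧ (b ≤ n ∨ δ n < (ν:ℝ) - θ) with hRdef
    have hRb : R b := ⟨hmb, Or.inl le_rfl⟩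
    set c : ℕ := Nat.find ⟨b, hRb⟩ with hcdef
    have hcR : R c := Nat.find_spec ⟨b, hRb⟩
    have hcb : c ≤ b := Nat.find_le hRb
    have hmc : m ≤ c := hcR.1
    have hbadf : ∀ n, m ≤ n → n < c → n < b ∧ (ν:ℝ) - θ ≤ δ n := by
      intro n h1 h2
      have := Nat.find_min ⟨b, hRb⟩ h2
      simp only [hRdef] at this
      push_neg at this
      obtain ⟨h3, h4⟩ := this h1
      exact ⟨by omega, h4⟩
    -- bad block bound
    have hbad : ‖∑ n ∈ Finset.Ico m c, E n‖ ≤ 2*θ/lam1 + 1 := by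
      rcases Nat.eq_or_lt_of_le hmc with hEq | hLt
      · rw [← hEq, Finset.Ico_self, Finset.sum_empty, norm_zero]; positivity
      have hmb' : m < b := (hbadf m le_rfl hLt).1
      have hδm : δ m < (ν:ℝ) + θ := by
        rcases hmQ.2 with h | h; · omega
        exact h
      have hδc1 : (ν:ℝ) - θ ≤ δ (c-1) := (hbadf (c-1) (by omega) (by omega)).2
      have hd := hdrop m (c-1) hma (by omega) (by omega)
      have hcast1 : ((c-1:ℕ):ℝ) = (c:ℝ) - 1 := by
        rw [Nat.cast_sub (by omega : 1 ≤ c)]; norm_num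
      have hcard : ((c:ℝ) - 1 - m) * lam1 ≤ 2*θ := by
        rw [hcast1] at hd
        nlinarith
      calc ‖∑ n ∈ Finset.Ico m c, E n‖ ≤ ∑ n ∈ Finset.Ico m c, ‖E n‖ := norm_sum_le _ _
        _ ≤ ∑ n ∈ Finset.Ico m c, 1 := by
            apply Finset.sum_le_sum
            intro i hi
            rw [Finset.mem_Ico] at hi
            exact hE i (le_trans hma hi.1) (by omega)
        _ = ((c - m : ℕ) : ℝ) := by
            rw [Finset.sum_const, Nat.card_Ico]; simp
        _ = ((c:ℝ) - m) := by rw [Nat.cast_sub hmc]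
        _ ≤ 2*θ/lam1 + 1 := by
            rw [div_add' _ _ _ hl0.ne', le_div_iff₀ hl0]
            nlinarith
    -- combine first two blocks
    have hsplit1 : ∑ n ∈ Finset.Ico a c, E n = ∑ n ∈ Finset.Ico a m, E n + ∑ n ∈ Finset.Ico m c, E n :=
      (Finset.sum_Ico_consecutive _ hma hmc).symm
    have hfirst : ‖∑ n ∈ Finset.Ico a c, E n‖ ≤ P := by
      rw [hsplit1]
      calc ‖∑ n ∈ Finset.Ico a m, E n + ∑ n ∈ Finset.Ico m c, E n‖
          ≤ ‖∑ n ∈ Finset.Ico a m, E n‖ + ‖∑ n ∈ Finset.Ico m c, E n‖ := norm_add_le _ _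
        _ ≤ 1/θ + (2*θ/lam1 + 1) := add_le_add hKL hbad
        _ = P := by rw [hPdef]; ring
    rcases Nat.eq_or_lt_of_le hcb with hEq | hLt
    · -- c = b : done
      have hbc : Finset.Ico a b = Finset.Ico a c := by rw [hEq]
      rw [hbc]
      calc ‖∑ n ∈ Finset.Ico a c, E n‖ ≤ P := hfirst
        _ ≤ ((⌊δ a + θ⌋ : ℝ) - (⌊δ (b-1) + θ⌋ : ℝ) + 1) * P := by
            have h1 : ((⌊δ (b-1) + θ⌋ : ℤ):ℝ) ≤ ((ν:ℤ):ℝ) := by exact_mod_cast hFa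
            nlinarith
    · -- c < b : recurse
      have hca : a < c := by
        rcases Nat.eq_or_lt_of_le (le_trans hma hmc) with h | h
        · exfalso
          have := hcR.2
          rcases this with h2 | h2
          · omega
          · rw [← h] at h2; linarith
        · exact h
      have hIH := ih c b (by omega) hLt
        (fun n h1 h2 => hE n (by omega) h2)
        (fun n h1 h2 => hrel n (by omega) h2)
        (fun n h1 h2 => hstep n (by omega) h2)
      have hδc : δ c < (ν:ℝ) - θ := by
        rcases hcR.2 with h | h; · omega
        exact h
      have hfc : ⌊δ c + θ⌋ ≤ ν - 1 := by
        have : ⌊δ c + θ⌋ < ν := Int.floor_lt.2 (by push_cast; linarith)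
        omega
      have hFc : ⌊δ (b-1) + θ⌋ ≤ ⌊δ c + θ⌋ := by
        apply Int.floor_le_floor
        have := hanti c (b-1) hca.le (by omega) (by omega)
        linarith
      have hsplit2 : ∑ n ∈ Finset.Ico a b, E n = ∑ n ∈ Finset.Ico a c, E n + ∑ n ∈ Finset.Ico c b, E n :=
        (Finset.sum_Ico_consecutive _ hca.le hcb).symm
      rw [hsplit2]
      calc ‖∑ n ∈ Finset.Ico a c, E n + ∑ n ∈ Finset.Ico c b, E n‖
          ≤ ‖∑ n ∈ Finset.Ico a c, E n‖ + ‖∑ n ∈ Finset.Ico c b, E n‖ := norm_add_le _ _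
        _ ≤ P + ((⌊δ c + θ⌋ : ℝ) - (⌊δ (b-1) + θ⌋ : ℝ) + 1) * P := add_le_add hfirst hIH
        _ ≤ ((⌊δ a + θ⌋ : ℝ) - (⌊δ (b-1) + θ⌋ : ℝ) + 1) * P := by
            have h1 : ((⌊δ c + θ⌋ : ℤ):ℝ) ≤ (ν:ℝ) - 1 := by exact_mod_cast Int.cast_le.2 (by omega : ⌊δ c + θ⌋ ≤ ν - 1)
            have h2 : ((⌊δ (b-1) + θ⌋ : ℤ):ℝ) ≤ ((⌊δ c + θ⌋ : ℤ):ℝ) := by exact_mod_cast hFc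
            nlinarith
  

def fr (k : ℕ) (x hr t : ℝ) : ℝ := hr * (x - t^k) ^ ((1:ℝ)/k)
def fp (k : ℕ) (x hr t : ℝ) : ℝ := -(hr * t^(k-1) * (x - t^k) ^ ((1:ℝ)/k - 1))
def fpp (k : ℕ) (x hr t : ℝ) : ℝ := -(hr * ((k:ℝ)-1) * t^(k-2) * x * (x - t^k) ^ ((1:ℝ)/k - 2))

lemma hasDerivAt_fr (k : ℕ) (hk : 1 ≤ k) (x hr t : ℝ) (ht : 0 < x - t^k) :
    HasDerivAt (fr k x hr) (fp k x hr t) t := by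
  have hk0 : (k:ℝ) ≠ 0 := Nat.cast_ne_zero.2 (by omega)
  have hinner : HasDerivAt (fun t : ℝ => x - t^k) (-((k:ℝ) * t^(k-1))) t :=
    (hasDerivAt_pow k t).const_sub x
  have houter : HasDerivAt (fun y : ℝ => y ^ ((1:ℝ)/k))
      (((1:ℝ)/k) * (x - t^k) ^ ((1:ℝ)/k - 1)) (x - t^k) :=
    Real.hasDerivAt_rpow_const (Or.inl ht.ne')
  have hcomp := (houter.comp t hinner).const_mul hr
  refine hcomp.congr_deriv (Eq.symm ?_)
  show fp k x hr t = hr * (((1:ℝ)/k) * (x - t^k) ^ ((1:ℝ)/k - 1) * (-((k:ℝ) * t^(k-1))))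
  rw [fp]
  linear_combination (hr * t^(k-1) * (x - t^k) ^ ((1:ℝ)/k - 1)) * (one_div_mul_cancel hk0)

lemma hasDerivAt_fp (k : ℕ) (hk : 2 ≤ k) (x hr t : ℝ) (ht : 0 < x - t^k) :
    HasDerivAt (fp k x hr) (fpp k x hr t) t := by
  have hk0 : (k:ℝ) ≠ 0 := Nat.cast_ne_zero.2 (by omega)
  have h1 : HasDerivAt (fun t : ℝ => t^(k-1)) (((k-1:ℕ):ℝ) * t^(k-1-1)) t := hasDerivAt_pow (k-1) t
  have hinner : HasDerivAt (fun t : ℝ => x - t^k) (-((k:ℝ) * t^(k-1))) t :=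
    (hasDerivAt_pow k t).const_sub x
  have h2 : HasDerivAt (fun t : ℝ => (x - t^k) ^ ((1:ℝ)/k - 1))
      ((((1:ℝ)/k - 1) * (x - t^k) ^ ((1:ℝ)/k - 1 - 1)) * (-((k:ℝ) * t^(k-1)))) t :=
    by have houter := Real.hasDerivAt_rpow_const (x := x - t^k) (p := (1:ℝ)/k - 1) (Or.inl ht.ne'); exact houter.comp t hinner
  have hmul := (h1.fun_mul h2).const_mul (-hr)
  have hfun : (fun y : ℝ => -hr * (y ^ (k-1) * (x - y^k) ^ ((1:ℝ)/k - 1))) = fp k x hr := by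
    funext y; rw [fp]; ring
  rw [hfun] at hmul
  refine hmul.congr_deriv (Eq.symm ?_)
  rw [fpp]
  have hc : ((k-1:ℕ):ℝ) = (k:ℝ) - 1 := by
    push_cast [Nat.cast_sub (by omega : 1 ≤ k)]; ring
  have he1 : (x - t^k) ^ ((1:ℝ)/k - 1) = (x - t^k) ^ ((1:ℝ)/k - 2) * (x - t^k) := by
    rw [show (1:ℝ)/k - 1 = ((1:ℝ)/k - 2) + 1 by ring, Real.rpow_add_one ht.ne']
  have he2 : t^(k-1) * t^(k-1) = t^(k-2) * t^k := by
    rw [← pow_add, ← pow_add]; congr 1; omega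
  have he3 : (1:ℝ)/k - 1 - 1 = (1:ℝ)/k - 2 := by ring
  have hinv : (1:ℝ)/k * k = 1 := by field_simp
  have hkk : k - 1 - 1 = k - 2 := by omega
  rw [hc, he3, hkk, he1]
  set A := (x - t^k) ^ ((1:ℝ)/k - 2)
  linear_combination hr * ((k:ℝ)-1) * A * he2 - hr * (t^(k-1) * t^(k-1)) * A * hinv

lemma fpp_bounds (k : ℕ) (hk : 4 ≤ k) (x hr M t : ℝ) (hM : 1 ≤ M) (hhr : 0 < hr)
    (h1 : M ≤ t) (h2 : t ≤ 2*M) (h3 : t^k ≤ x/2) (hx : 0 < x) :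
    hr * ((k:ℝ)-1) * M^(k-2) * x ^ ((1:ℝ)/k - 1) ≤ -fpp k x hr t ∧
    -fpp k x hr t ≤ 2^k * (hr * ((k:ℝ)-1) * M^(k-2) * x ^ ((1:ℝ)/k - 1)) := by
  have hk0 : (k:ℝ) ≠ 0 := Nat.cast_ne_zero.2 (by omega)
  have ht0 : (0:ℝ) < t := lt_of_lt_of_le (by linarith) h1
  have hxt : 0 < x - t^k := by nlinarith
  have hxt2 : x/2 ≤ x - t^k := by nlinarith
  have hk1 : (1:ℝ) ≤ (k:ℝ) - 1 := by
    have : (4:ℝ) ≤ (k:ℝ) := by exact_mod_cast hk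
    linarith
  have hfpp : -fpp k x hr t = hr * ((k:ℝ)-1) * t^(k-2) * x * (x - t^k) ^ ((1:ℝ)/k - 2) := by
    rw [fpp]; ring
  have hexp : x ^ ((1:ℝ)/k - 1) = x * x ^ ((1:ℝ)/k - 2) := by
    rw [show (1:ℝ)/k - 1 = ((1:ℝ)/k - 2) + 1 by ring, Real.rpow_add_one hx.ne']
    ring
  have hpow_lo : M^(k-2) ≤ t^(k-2) := pow_le_pow_left₀ (by linarith) h1 _
  have hpow_hi : t^(k-2) ≤ 2^(k-2) * M^(k-2) := by
    calc t^(k-2) ≤ (2*M)^(k-2) := pow_le_pow_left₀ ht0.le h2 _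
      _ = 2^(k-2) * M^(k-2) := mul_pow 2 M (k-2)
  have hrpow_lo : x ^ ((1:ℝ)/k - 2) ≤ (x - t^k) ^ ((1:ℝ)/k - 2) := by
    apply Real.rpow_le_rpow_of_nonpos hxt (by nlinarith [pow_pos ht0 k])
    have : (1:ℝ)/k ≤ 1 := by
      rw [div_le_one (by positivity)]
      exact_mod_cast (by omega : 1 ≤ k)
    linarith
  have hrpow_hi : (x - t^k) ^ ((1:ℝ)/k - 2) ≤ 4 * x ^ ((1:ℝ)/k - 2) := by
    have hstep1 : (x - t^k) ^ ((1:ℝ)/k - 2) ≤ (x/2) ^ ((1:ℝ)/k - 2) := by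
      refine Real.rpow_le_rpow_of_nonpos (by positivity) hxt2 ?_
      have : (1:ℝ)/k ≤ 1 := by
        rw [div_le_one (by positivity)]
        exact_mod_cast (by omega : 1 ≤ k)
      linarith
    have hstep2 : (x/2 : ℝ) ^ ((1:ℝ)/k - 2) = x ^ ((1:ℝ)/k - 2) / 2 ^ ((1:ℝ)/k - 2) :=
      Real.div_rpow hx.le (by norm_num) _
    have hstep3 : (1/4 : ℝ) ≤ (2:ℝ) ^ ((1:ℝ)/k - 2) := by
      have h4 : (2:ℝ) ^ ((-2 : ℝ)) ≤ (2:ℝ) ^ ((1:ℝ)/k - 2) := by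
        apply Real.rpow_le_rpow_of_exponent_le (by norm_num)
        have : (0:ℝ) ≤ (1:ℝ)/k := by positivity
        linarith
      have h5 : (2:ℝ) ^ ((-2 : ℝ)) = 1/4 := by
        rw [show ((-2:ℝ)) = ((-2 : ℤ) : ℝ) by norm_num, Real.rpow_intCast]
        norm_num
      linarith
    have hx2pos : (0:ℝ) < x ^ ((1:ℝ)/k - 2) := Real.rpow_pos_of_pos hx _
    have h2pos : (0:ℝ) < (2:ℝ) ^ ((1:ℝ)/k - 2) := Real.rpow_pos_of_pos (by norm_num) _
    calc (x - t^k) ^ ((1:ℝ)/k - 2) ≤ x ^ ((1:ℝ)/k - 2) / 2 ^ ((1:ℝ)/k - 2) := by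
          rw [← hstep2]; exact hstep1
      _ ≤ 4 * x ^ ((1:ℝ)/k - 2) := by
          rw [div_le_iff₀ h2pos]
          nlinarith
  have hMpos : (0:ℝ) < M^(k-2) := by positivity
  have hxp : (0:ℝ) < x ^ ((1:ℝ)/k - 2) := Real.rpow_pos_of_pos hx _
  have hxtp : (0:ℝ) < (x - t^k) ^ ((1:ℝ)/k - 2) := Real.rpow_pos_of_pos hxt _
  constructor
  · rw [hfpp, hexp]
    have e1 : hr * ((k:ℝ)-1) * M^(k-2) * (x * x ^ ((1:ℝ)/k - 2))
        ≤ hr * ((k:ℝ)-1) * t^(k-2) * (x * x ^ ((1:ℝ)/k - 2)) := by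
      apply mul_le_mul_of_nonneg_right _ (by positivity)
      exact mul_le_mul_of_nonneg_left hpow_lo (mul_nonneg hhr.le (by linarith))
    have e2 : hr * ((k:ℝ)-1) * t^(k-2) * (x * x ^ ((1:ℝ)/k - 2))
        ≤ hr * ((k:ℝ)-1) * t^(k-2) * (x * (x - t^k) ^ ((1:ℝ)/k - 2)) := by
      apply mul_le_mul_of_nonneg_left _ (by positivity)
      exact mul_le_mul_of_nonneg_left hrpow_lo hx.le
    calc hr * ((k:ℝ)-1) * M^(k-2) * (x * x ^ ((1:ℝ)/k - 2))
        ≤ hr * ((k:ℝ)-1) * t^(k-2) * (x * (x - t^k) ^ ((1:ℝ)/k - 2)) := le_trans e1 e2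
      _ = hr * ((k:ℝ)-1) * t^(k-2) * x * (x - t^k) ^ ((1:ℝ)/k - 2) := by ring
  · rw [hfpp, hexp]
    have hts : (0:ℝ) ≤ t^(k-2) := by positivity
    have e1 : hr * ((k:ℝ)-1) * t^(k-2) * x * (x - t^k) ^ ((1:ℝ)/k - 2)
        ≤ hr * ((k:ℝ)-1) * (2^(k-2) * M^(k-2)) * x * (4 * x ^ ((1:ℝ)/k - 2)) := by
      have b1 : t^(k-2) * (x - t^k) ^ ((1:ℝ)/k - 2) ≤ (2^(k-2) * M^(k-2)) * (4 * x ^ ((1:ℝ)/k - 2)) := by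
        apply mul_le_mul hpow_hi hrpow_hi hxtp.le (by positivity)
      calc hr * ((k:ℝ)-1) * t^(k-2) * x * (x - t^k) ^ ((1:ℝ)/k - 2)
          = (hr * ((k:ℝ)-1) * x) * (t^(k-2) * (x - t^k) ^ ((1:ℝ)/k - 2)) := by ring
        _ ≤ (hr * ((k:ℝ)-1) * x) * ((2^(k-2) * M^(k-2)) * (4 * x ^ ((1:ℝ)/k - 2))) := by
            refine mul_le_mul_of_nonneg_left b1 ?_
            have : (0:ℝ) < hr * ((k:ℝ)-1) * x := mul_pos (mul_pos hhr (by linarith)) hx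
            linarith
        _ = hr * ((k:ℝ)-1) * (2^(k-2) * M^(k-2)) * x * (4 * x ^ ((1:ℝ)/k - 2)) := by ring
    have e2 : hr * ((k:ℝ)-1) * (2^(k-2) * M^(k-2)) * x * (4 * x ^ ((1:ℝ)/k - 2))
        = 2^(k-2) * 4 * (hr * ((k:ℝ)-1) * M^(k-2) * (x * x ^ ((1:ℝ)/k - 2))) := by ring
    have e3 : (2:ℝ)^(k-2) * 4 ≤ 2^k := by
      have : (2:ℝ)^k = 2^(k-2) * 2^2 := by rw [← pow_add]; congr 1; omega
      rw [this]; norm_num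
    calc hr * ((k:ℝ)-1) * t^(k-2) * x * (x - t^k) ^ ((1:ℝ)/k - 2)
        ≤ 2^(k-2) * 4 * (hr * ((k:ℝ)-1) * M^(k-2) * (x * x ^ ((1:ℝ)/k - 2))) := by
          rw [← e2]; exact e1
      _ ≤ 2^k * (hr * ((k:ℝ)-1) * M^(k-2) * (x * x ^ ((1:ℝ)/k - 2))) := by
          apply mul_le_mul_of_nonneg_right e3 (by positivity)


lemma step_mvt (k : ℕ) (hk : 2 ≤ k) (x hr u : ℝ)
    (hreg : ∀ t, u ≤ t → t ≤ u + 2 → 0 < x - t^k) :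
    ∃ η, u < η ∧ η < u + 2 ∧
      (fr k x hr (u+1) - fr k x hr u) - (fr k x hr (u+2) - fr k x hr (u+1))
        = -fpp k x hr η := by
  have hk1 : 1 ≤ k := by omega
  set G : ℝ → ℝ := fun t => fr k x hr (t+1) - fr k x hr t with hGdef
  have hG : ∀ t, u ≤ t → t ≤ u+1 → HasDerivAt G (fp k x hr (t+1) - fp k x hr t) t := by
    intro t h1 h2
    have ha : HasDerivAt (fun t : ℝ => fr k x hr (t+1)) (fp k x hr (t+1)) t := by
      have hcomp := (hasDerivAt_fr k hk1 x hr (t+1) (hreg (t+1) (by linarith) (by linarith))).comp t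
        ((hasDerivAt_id t).add_const 1)
      simpa [Function.comp_def] using hcomp
    exact ha.sub (hasDerivAt_fr k hk1 x hr t (hreg t h1 (by linarith)))
  obtain ⟨s, hs, hseq⟩ := exists_hasDerivAt_eq_slope G (fun t => fp k x hr (t+1) - fp k x hr t)
    (by linarith : u < u + 1)
    (fun t ht => ((hG t ht.1 ht.2).continuousAt).continuousWithinAt)
    (fun t ht => hG t ht.1.le ht.2.le)
  obtain ⟨η, hη, hηeq⟩ := exists_hasDerivAt_eq_slope (fp k x hr) (fpp k x hr)
    (by linarith : s < s + 1)
    (fun t ht => ((hasDerivAt_fp k hk x hr t (hreg t (by rcases ht with ⟨a,b⟩; rcases hs with ⟨c,d⟩; linarith)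
      (by rcases ht with ⟨a,b⟩; rcases hs with ⟨c,d⟩; linarith))).continuousAt).continuousWithinAt)
    (fun t ht => hasDerivAt_fp k hk x hr t (hreg t (by rcases ht with ⟨a,b⟩; rcases hs with ⟨c,d⟩; linarith)
      (by rcases ht with ⟨a,b⟩; rcases hs with ⟨c,d⟩; linarith)))
  rcases hs with ⟨hs1, hs2⟩
  rcases hη with ⟨hη1, hη2⟩
  refine ⟨η, by linarith, by linarith, ?_⟩
  have e1 : fp k x hr (s+1) - fp k x hr s = G (u+1) - G u := by
    rw [hseq]; field_simp; ring
  have e2 : fpp k x hr η = fp k x hr (s+1) - fp k x hr s := by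
    rw [hηeq]; field_simp; ring
  have e3 : G (u+1) - G u = (fr k x hr (u+2) - fr k x hr (u+1)) - (fr k x hr (u+1) - fr k x hr u) := by
    rw [hGdef]
    show (fr k x hr (u+1+1) - fr k x hr (u+1)) - (fr k x hr (u+1) - fr k x hr u) = _
    rw [show u+1+1 = u+2 by ring]
  linarith

lemma rpow_lam0 (k : ℕ) (hk : 4 ≤ k) (hr x M : ℝ) (h1 : 0 < hr) (h2 : 0 < x) (h3 : 0 < M) (e : ℝ) :
    (hr * M^(k-2) * x^((1:ℝ)/k - 1)) ^ e
      = hr^e * M^(((k:ℝ)-2)*e) * x^(((1:ℝ)/k - 1)*e) := by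
  rw [Real.mul_rpow (by positivity) (by positivity), Real.mul_rpow (by positivity) (by positivity)]
  rw [← Real.rpow_natCast M (k-2), ← Real.rpow_mul h3.le, ← Real.rpow_mul h2.le]
  congr 2
  push_cast [Nat.cast_sub (by omega : 2 ≤ k)]
  ring

set_option maxHeartbeats 2000000 in
lemma pos_case (k : ℕ) (hk : 4 ≤ k) (x hr M : ℝ) (hx : 1 < x) (hhr : 1 ≤ hr) (hM : 1 ≤ M) :
    ‖∑ m ∈ Finset.Ioc ⌊M⌋₊ ⌊min (2 * M) ((x / 2) ^ ((1 : ℝ) / k))⌋₊,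
        Complex.exp (2 * Real.pi * Complex.I *
          ((hr * (x - (m : ℝ) ^ k) ^ ((1 : ℝ) / k) : ℝ) : ℂ))‖ ≤
      (3 * 2^k * k + 7) * (hr ^ (-(1 : ℝ) / 2) * x ^ (((k : ℝ) - 1) / (2 * k)) *
            M ^ ((2 - (k : ℝ)) / 2) +
          hr ^ ((1 : ℝ) / 2) * x ^ ((1 - (k : ℝ)) / (2 * k)) * M ^ ((k : ℝ) / 2)) := by
  have hk0 : (k:ℝ) ≠ 0 := Nat.cast_ne_zero.2 (by omega)
  have hkR : (4:ℝ) ≤ (k:ℝ) := by exact_mod_cast hk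
  have hx0 : (0:ℝ) < x := by linarith
  have hM0 : (0:ℝ) < M := by linarith
  have hhr0 : (0:ℝ) < hr := by linarith
  set Mp : ℝ := min (2 * M) ((x / 2) ^ ((1 : ℝ) / k)) with hMpdef
  set a : ℕ := ⌊M⌋₊ with hadef
  set b : ℕ := ⌊Mp⌋₊ with hbdef
  set A : ℝ := hr ^ (-(1 : ℝ) / 2) * x ^ (((k : ℝ) - 1) / (2 * k)) * M ^ ((2 - (k : ℝ)) / 2) with hAdef
  set B : ℝ := hr ^ ((1 : ℝ) / 2) * x ^ ((1 - (k : ℝ)) / (2 * k)) * M ^ ((k : ℝ) / 2) with hBdef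
  have hApos : 0 < A := by
    apply mul_pos (mul_pos (Real.rpow_pos_of_pos hhr0 _) (Real.rpow_pos_of_pos hx0 _))
      (Real.rpow_pos_of_pos hM0 _)
  have hBpos : 0 < B := by
    apply mul_pos (mul_pos (Real.rpow_pos_of_pos hhr0 _) (Real.rpow_pos_of_pos hx0 _))
      (Real.rpow_pos_of_pos hM0 _)
  have hCpos : (0:ℝ) < 3 * 2^k * k + 7 := by positivity
  -- trivial empty case
  rcases le_or_gt b a with hba | hab
  · rw [Finset.Ioc_eq_empty (by omega), Finset.sum_empty, norm_zero]
    positivity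
  -- nonempty case
  have ha1 : 1 ≤ a := by
    rw [hadef]
    exact Nat.le_floor (by exact_mod_cast hM)
  have haM : (a:ℝ) ≤ M := Nat.floor_le hM0.le
  have haM' : M - 1 < (a:ℝ) := Nat.sub_one_lt_floor M
  have hMp0 : (0:ℝ) ≤ Mp := le_min (by linarith) (Real.rpow_nonneg (by linarith) _)
  have hbMp : (b:ℝ) ≤ Mp := Nat.floor_le hMp0
  have hMp2M : Mp ≤ 2 * M := min_le_left _ _
  have hMpx : Mp ≤ (x/2) ^ ((1:ℝ)/k) := min_le_right _ _
  have hb2 : (2:ℝ) ≤ (b:ℝ) := by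
    have : a + 1 ≤ b := hab
    have : ((a:ℝ)) + 1 ≤ (b:ℝ) := by exact_mod_cast this
    have : (1:ℝ) ≤ (a:ℝ) := by exact_mod_cast ha1
    linarith
  have hx2' : True := trivial
  have hx2 : (2:ℝ) ≤ x := by
    have h1 : (1:ℝ) ≤ (x/2) ^ ((1:ℝ)/k) := le_trans (by linarith) hMpx
    have h2 : (1:ℝ) ≤ ((x/2) ^ ((1:ℝ)/k))^k := by
      calc (1:ℝ) = 1^k := (one_pow k).symm
        _ ≤ ((x/2) ^ ((1:ℝ)/k))^k := pow_le_pow_left₀ (by norm_num) h1 k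
    rw [show (1:ℝ)/k = ((k:ℕ):ℝ)⁻¹ by rw [one_div],
      Real.rpow_inv_natCast_pow (by linarith) (by omega)] at h2
    linarith
  -- region facts
  have hregion : ∀ t : ℝ, M ≤ t → t ≤ Mp → t^k ≤ x/2 := by
    intro t h1 h2
    calc t^k ≤ ((x/2) ^ ((1:ℝ)/k))^k := pow_le_pow_left₀ (by linarith) (by linarith) k
      _ = x/2 := by
          rw [show (1:ℝ)/k = ((k:ℕ):ℝ)⁻¹ by rw [one_div],
            Real.rpow_inv_natCast_pow (by linarith) (by omega)]
  have hregion' : ∀ t : ℝ, M ≤ t → t ≤ Mp → 0 < x - t^k := by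
    intro t h1 h2
    have := hregion t h1 h2
    linarith
  -- the exponential sequence
  set E : ℕ → ℂ := fun n => Complex.exp (2 * Real.pi * Complex.I * ((fr k x hr (n:ℝ) : ℝ) : ℂ)) with hEdef
  set δ : ℕ → ℝ := fun n => fr k x hr ((n:ℝ)+1) - fr k x hr (n:ℝ) with hδdef
  have hEnorm : ∀ n : ℕ, ‖E n‖ = 1 := by
    intro n
    rw [hEdef]
    simp only [Complex.norm_exp]
    rw [show (2 * (Real.pi:ℂ) * Complex.I * ((fr k x hr (n:ℝ) : ℝ) : ℂ)).re = 0 by simp]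
    exact Real.exp_zero
  have hrelE : ∀ n : ℕ, E (n+1) = E n * Complex.exp (2 * Real.pi * Complex.I * ((δ n : ℝ) : ℂ)) := by
    intro n
    have harg : (2 * (Real.pi:ℂ) * Complex.I * ((fr k x hr ((n+1:ℕ):ℝ) : ℝ) : ℂ))
        = 2 * (Real.pi:ℂ) * Complex.I * ((fr k x hr (n:ℝ) : ℝ) : ℂ)
          + 2 * (Real.pi:ℂ) * Complex.I * ((δ n : ℝ) : ℂ) := by
      rw [hδdef]
      simp only
      rw [show ((n+1:ℕ):ℝ) = (n:ℝ)+1 by push_cast; ring]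
      push_cast
      ring
    rw [hEdef]
    simp only
    rw [harg, Complex.exp_add]
  -- step bounds
  set lam0 : ℝ := hr * M^(k-2) * x^((1:ℝ)/k - 1) with hlam0def
  have hlam0pos : 0 < lam0 := by
    apply mul_pos (mul_pos hhr0 (by positivity)) (Real.rpow_pos_of_pos hx0 _)
  set lam1 : ℝ := ((k:ℝ)-1) * lam0 with hlam1def
  set lam2 : ℝ := 2^k * lam1 with hlam2def
  have hlam1pos : 0 < lam1 := mul_pos (by linarith) hlam0pos
  have hlam2pos : 0 < lam2 := mul_pos (by positivity) hlam1pos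
  have hstepb : ∀ n : ℕ, a + 1 ≤ n → n + 2 ≤ b →
      lam1 ≤ δ n - δ (n+1) ∧ δ n - δ (n+1) ≤ lam2 := by
    intro n h1 h2
    have hnM : M ≤ (n:ℝ) := by
      have : ((a:ℝ)) + 1 ≤ (n:ℝ) := by exact_mod_cast h1
      linarith
    have hn2 : (n:ℝ) + 2 ≤ Mp := by
      have : ((n:ℕ):ℝ) + 2 = ((n+2:ℕ):ℝ) := by push_cast; ring
      rw [this]
      calc ((n+2:ℕ):ℝ) ≤ (b:ℝ) := by exact_mod_cast h2
        _ ≤ Mp := hbMp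
    have hreg : ∀ t, (n:ℝ) ≤ t → t ≤ (n:ℝ) + 2 → 0 < x - t^k := by
      intro t ht1 ht2
      exact hregion' t (by linarith) (by linarith)
    obtain ⟨η, hη1, hη2, hηeq⟩ := step_mvt k (by omega) x hr (n:ℝ) hreg
    have hδeq : δ n - δ (n+1) = -fpp k x hr η := by
      rw [hδdef]
      simp only
      push_cast
      rw [← hηeq]
      ring_nf
    have hbnds := fpp_bounds k hk x hr M η hM hhr0 (by linarith) (by
        have : η ≤ Mp := by linarith
        linarith) (hregion η (by linarith) (by linarith)) hx0
    rw [hδeq]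
    constructor
    · calc lam1 = hr * ((k:ℝ)-1) * M^(k-2) * x ^ ((1:ℝ)/k - 1) := by
            rw [hlam1def, hlam0def]; ring
        _ ≤ -fpp k x hr η := hbnds.1
    · calc -fpp k x hr η ≤ 2^k * (hr * ((k:ℝ)-1) * M^(k-2) * x ^ ((1:ℝ)/k - 1)) := hbnds.2
        _ = lam2 := by rw [hlam2def, hlam1def, hlam0def]; ring
  -- θ
  set θ : ℝ := lam0 ^ ((1:ℝ)/2) with hθdef
  have hθpos : 0 < θ := Real.rpow_pos_of_pos hlam0pos _
  have hθsq : θ * θ = lam0 := by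
    rw [hθdef, ← Real.rpow_add hlam0pos]
    norm_num
  have hAeq : lam0 ^ (-(1:ℝ)/2) = A := by
    rw [hlam0def, rpow_lam0 k hk hr x M hhr0 hx0 hM0]
    rw [show ((k:ℝ)-2)*(-(1:ℝ)/2) = (2-(k:ℝ))/2 by ring]
    rw [show ((1:ℝ)/k - 1)*(-(1:ℝ)/2) = ((k:ℝ)-1)/(2*k) by
      linear_combination (-(1:ℝ)/2) * (one_div_mul_cancel hk0)]
    rw [hAdef]
    ring
  have hBeq : M * θ = B := by
    rw [hθdef, hlam0def, rpow_lam0 k hk hr x M hhr0 hx0 hM0]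
    rw [show ((1:ℝ)/k - 1)*((1:ℝ)/2) = (1-(k:ℝ))/(2*k) by
      linear_combination ((1:ℝ)/2) * (one_div_mul_cancel hk0)]
    rw [hBdef]
    rw [show M * (hr ^ ((1:ℝ)/2) * M ^ (((k:ℝ)-2)*((1:ℝ)/2)) * x ^ ((1-(k:ℝ))/(2*k)))
        = hr ^ ((1:ℝ)/2) * x ^ ((1-(k:ℝ))/(2*k)) * (M ^ (((k:ℝ)-2)*((1:ℝ)/2)) * M ^ (1:ℝ)) by
      rw [Real.rpow_one]; ring]
    rw [← Real.rpow_add hM0]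
    rw [show ((k:ℝ)-2)*((1:ℝ)/2) + 1 = (k:ℝ)/2 by ring]
  have hAinv : A = 1/θ := by
    rw [← hAeq, hθdef, show (-(1:ℝ)/2) = -((1:ℝ)/2) by ring, Real.rpow_neg hlam0pos.le]
    exact (one_div _).symm
  -- sum as Ico
  have hIoc : Finset.Ioc a b = Finset.Ico (a+1) (b+1) := by
    ext n; simp [Finset.mem_Ioc, Finset.mem_Ico]
  have hsum_eq : ∑ m ∈ Finset.Ioc a b,
      Complex.exp (2 * Real.pi * Complex.I * ((hr * (x - (m : ℝ) ^ k) ^ ((1 : ℝ) / k) : ℝ) : ℂ))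
      = ∑ m ∈ Finset.Ioc a b, E m := by
    apply Finset.sum_congr rfl
    intro m _
    rfl
  rw [hsum_eq]
  clear_value a b E δ θ lam0 lam1 lam2
  -- case split on θ
  rcases le_or_gt θ (1/2) with hθhalf | hθhalf
  · -- van der Corput case
    have hA2 : (2:ℝ) ≤ A := by
      rw [hAinv]
      rw [le_div_iff₀ hθpos]
      linarith
    have hsplit : ∑ m ∈ Finset.Ioc a b, E m = ∑ m ∈ Finset.Ico (a+1) b, E m + E b := by
      rw [hIoc, Finset.sum_Ico_succ_top (by omega)]
    have hIcobound : ‖∑ m ∈ Finset.Ico (a+1) b, E m‖ ≤ (lam2 * M + 2) * (3/θ) := by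
      rcases le_or_gt b (a+1) with hba1 | hab1
      · rw [Finset.Ico_eq_empty (by omega), Finset.sum_empty, norm_zero]
        positivity
      -- blocks
      have hblocks := blocks θ lam1 hθpos hθhalf hlam1pos E δ b (a+1) b (by omega) hab1
        (fun n _ _ => le_of_eq (hEnorm n))
        (fun n _ _ => hrelE n)
        (fun n h1 h2 => (hstepb n h1 (by omega)).1)
      -- drop bound
      have hdrop2 : ∀ n : ℕ, a+1 ≤ n → (n < b → δ (a+1) - δ n ≤ lam2 * ((n:ℝ) - ((a:ℝ)+1))) := by
        intro n h1
        induction n, h1 using Nat.le_induction with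
        | base => intro _; simp
        | succ n hn ihn =>
          intro h2
          have hs := (hstepb n hn (by omega)).2
          have := ihn (by omega)
          push_cast
          push_cast at this
          nlinarith
      have hmono2 : ∀ n : ℕ, a+1 ≤ n → (n < b → δ n ≤ δ (a+1)) := by
        intro n h1
        induction n, h1 using Nat.le_induction with
        | base => intro _; exact le_rfl
        | succ n hn ihn =>
          intro h2
          have hs := (hstepb n hn (by omega)).1
          have := ihn (by omega)
          linarith
      have hcoeff : ((⌊δ (a+1) + θ⌋ : ℝ) - (⌊δ (b-1) + θ⌋ : ℝ) + 1) ≤ lam2 * M + 2 := by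
        have h1 : ((⌊δ (a+1) + θ⌋ : ℝ)) ≤ δ (a+1) + θ := Int.floor_le _
        have h2 : δ (b-1) + θ - 1 < ((⌊δ (b-1) + θ⌋ : ℝ)) := Int.sub_one_lt_floor _
        have h3 := hdrop2 (b-1) (by omega) (by omega)
        have h4 : ((b-1:ℕ):ℝ) = (b:ℝ) - 1 := by
          rw [Nat.cast_sub (by omega : 1 ≤ b)]; norm_num
        rw [h4] at h3
        have h5 : (b:ℝ) - 1 - ((a:ℝ)+1) ≤ M := by linarith
        nlinarith
      have hP3 : 1/θ + 2*θ/lam1 + 1 ≤ 3/θ := by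
        have e1 : 2*θ/lam1 ≤ (2/3)/θ := by
          rw [div_le_div_iff₀ hlam1pos (by positivity)]
          have : 3 * (θ * θ) ≤ lam1 := by
            rw [hθsq, hlam1def]
            nlinarith
          nlinarith
        have e2 : (1:ℝ) ≤ (1/2)/θ := by
          rw [le_div_iff₀ hθpos]; linarith
        have e3 : 1/θ + (2/3)/θ + (1/2)/θ ≤ 3/θ := by
          rw [← add_div, ← add_div, div_le_div_iff₀ hθpos hθpos]
          nlinarith
        linarith
      have hcoeffpos : (0:ℝ) ≤ (⌊δ (a+1) + θ⌋ : ℝ) - (⌊δ (b-1) + θ⌋ : ℝ) + 1 := by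
        have : ⌊δ (b-1) + θ⌋ ≤ ⌊δ (a+1) + θ⌋ := by
          apply Int.floor_le_floor
          have h3 := hmono2 (b-1) (by omega) (by omega)
          linarith
        have : ((⌊δ (b-1) + θ⌋:ℤ):ℝ) ≤ ((⌊δ (a+1) + θ⌋:ℤ):ℝ) := by exact_mod_cast this
        linarith
      calc ‖∑ m ∈ Finset.Ico (a+1) b, E m‖
          ≤ ((⌊δ (a+1) + θ⌋ : ℝ) - (⌊δ (b-1) + θ⌋ : ℝ) + 1) * (1/θ + 2*θ/lam1 + 1) := hblocks
        _ ≤ (lam2 * M + 2) * (3/θ) := by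
            have hPpos : (0:ℝ) ≤ 1/θ + 2*θ/lam1 + 1 := by
              have h1 : (0:ℝ) < 1/θ := div_pos one_pos hθpos
              have h2 : (0:ℝ) ≤ 2*θ/lam1 := le_of_lt (div_pos (by linarith) hlam1pos)
              linarith
            have hL2 : (0:ℝ) ≤ lam2 * M + 2 := by nlinarith [mul_pos hlam2pos hM0]
            exact mul_le_mul hcoeff hP3 hPpos hL2
    -- combine
    have htotal : ‖∑ m ∈ Finset.Ioc a b, E m‖ ≤ (lam2 * M + 2) * (3/θ) + 1 := by
      rw [hsplit]
      calc ‖∑ m ∈ Finset.Ico (a+1) b, E m + E b‖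
          ≤ ‖∑ m ∈ Finset.Ico (a+1) b, E m‖ + ‖E b‖ := norm_add_le _ _
        _ ≤ (lam2 * M + 2) * (3/θ) + 1 := by
            rw [hEnorm b]
            linarith
    have hfinal : (lam2 * M + 2) * (3/θ) + 1 ≤ (3 * 2^k * k + 7) * (A + B) := by
      have e1 : lam2 * M * (3/θ) = 3 * (2^k * ((k:ℝ)-1)) * (M * θ) := by
        rw [hlam2def, hlam1def]
        field_simp
        rw [← hθsq]
        ring
      have e2 : 2 * (3/θ) = 6 * (1/θ) := by ring
      have e3 : (1:ℝ) ≤ 1/θ := by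
        rw [le_div_iff₀ hθpos]; linarith
      have e4 : (lam2 * M + 2) * (3/θ) + 1
          = 3 * (2^k * ((k:ℝ)-1)) * (M * θ) + 6 * (1/θ) + 1 := by
        rw [mul_comm (lam2 * M + 2) (3/θ), mul_add, mul_comm (3/θ) (lam2*M), e1]
        ring
      rw [e4, hBeq, ← hAinv]
      have e5 : 3 * (2^k * ((k:ℝ)-1)) ≤ 3 * 2^k * k + 7 := by
        have : (0:ℝ) < 2^k := by positivity
        nlinarith
      have e6 : 6 * A + 1 ≤ 7 * A := by linarith
      have e7 : 3 * (2^k * ((k:ℝ)-1)) * B ≤ (3 * 2^k * k + 7) * B := by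
        apply mul_le_mul_of_nonneg_right e5 hBpos.le
      have e8 : (7:ℝ) * A ≤ (3 * 2^k * k + 7) * A := by
        apply mul_le_mul_of_nonneg_right _ hApos.le
        have : (0:ℝ) ≤ 3 * 2^k * k := by positivity
        linarith
      have h0 : (0:ℝ) ≤ 3 * 2^k * (k:ℝ) := by positivity
      have t1 : 3 * (2^k * ((k:ℝ)-1)) * (M * θ) ≤ (3 * 2^k * k + 7) * (M * θ) :=
        mul_le_mul_of_nonneg_right e5 (by positivity)
      have t2 : 6 * (1/θ) + 1 ≤ 7 * (1/θ) := by linarith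
      have t3 : (7:ℝ) * (1/θ) ≤ (3 * 2^k * k + 7) * (1/θ) :=
        mul_le_mul_of_nonneg_right (by linarith) (by positivity)
      rw [← hBeq, hAinv]
      calc 3 * (2^k * ((k:ℝ)-1)) * (M * θ) + 6 * (1/θ) + 1
          ≤ (3 * 2^k * k + 7) * (M * θ) + (3 * 2^k * k + 7) * (1/θ) := by linarith
        _ = (3 * 2^k * k + 7) * (1/θ + M * θ) := by ring
    linarith
  · -- trivial case
    have hcard : ‖∑ m ∈ Finset.Ioc a b, E m‖ ≤ (b:ℝ) - a := by
      calc ‖∑ m ∈ Finset.Ioc a b, E m‖ ≤ ∑ m ∈ Finset.Ioc a b, ‖E m‖ := norm_sum_le _ _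
        _ = ∑ m ∈ Finset.Ioc a b, 1 := by
            apply Finset.sum_congr rfl; intro m _; rw [hEnorm m]
        _ = ((b - a : ℕ) : ℝ) := by rw [Finset.sum_const, Nat.card_Ioc]; simp
        _ = (b:ℝ) - a := by rw [Nat.cast_sub (by omega)]
    have h2M : (b:ℝ) - a ≤ 2 * M := by
      have : (0:ℝ) ≤ (a:ℝ) := Nat.cast_nonneg a
      linarith
    calc ‖∑ m ∈ Finset.Ioc a b, E m‖ ≤ 2 * M := le_trans hcard h2M
      _ ≤ 4 * (M * θ) := by nlinarith
      _ = 4 * B := by rw [hBeq]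
      _ ≤ (3 * 2^k * k + 7) * (A + B) := by
          have h0 : (0:ℝ) ≤ 3 * 2^k * (k:ℝ) := by positivity
          calc (4:ℝ) * B ≤ (3 * 2^k * k + 7) * B :=
                mul_le_mul_of_nonneg_right (by linarith) hBpos.le
            _ ≤ (3 * 2^k * k + 7) * (A + B) :=
                mul_le_mul_of_nonneg_left (by linarith) (by linarith)

end VdC

end

theorem stmt5 (k : ℕ) (hk : 4 ≤ k) : ∃ C : ℝ, 0 < C ∧
    ∀ (x : ℝ) (h : ℤ) (M : ℝ), 1 < x → h ≠ 0 → 1 ≤ M →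
    ‖∑ m ∈ Finset.Ioc ⌊M⌋₊ ⌊min (2 * M) ((x / 2) ^ ((1 : ℝ) / k))⌋₊,
        Complex.exp (2 * Real.pi * Complex.I *
          (((h : ℝ) * (x - (m : ℝ) ^ k) ^ ((1 : ℝ) / k) : ℝ) : ℂ))‖ ≤
      C * (|(h : ℝ)| ^ (-(1 : ℝ) / 2) * x ^ (((k : ℝ) - 1) / (2 * k)) *
            M ^ ((2 - (k : ℝ)) / 2) +
          |(h : ℝ)| ^ ((1 : ℝ) / 2) * x ^ ((1 - (k : ℝ)) / (2 * k)) * M ^ ((k : ℝ) / 2)) := by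
  refine ⟨3 * 2^k * k + 7, by positivity, ?_⟩
  intro x h M hx hh hM
  have hhr : (1:ℝ) ≤ |(h:ℝ)| := by
    rw [← Int.cast_abs]
    exact_mod_cast Int.one_le_abs hh
  have key := VdC.pos_case k hk x |(h:ℝ)| M hx hhr hM
  rcases lt_or_gt_of_ne hh with hneg | hpos
  · -- h < 0
    have habs : ((h:ℝ)) = -|(h:ℝ)| := by
      rw [abs_of_neg (by exact_mod_cast hneg)]
      ring
    have hsum : ∑ m ∈ Finset.Ioc ⌊M⌋₊ ⌊min (2 * M) ((x / 2) ^ ((1 : ℝ) / k))⌋₊,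
        Complex.exp (2 * Real.pi * Complex.I *
          (((h : ℝ) * (x - (m : ℝ) ^ k) ^ ((1 : ℝ) / k) : ℝ) : ℂ))
        = (starRingEnd ℂ) (∑ m ∈ Finset.Ioc ⌊M⌋₊ ⌊min (2 * M) ((x / 2) ^ ((1 : ℝ) / k))⌋₊,
        Complex.exp (2 * Real.pi * Complex.I *
          ((|(h:ℝ)| * (x - (m : ℝ) ^ k) ^ ((1 : ℝ) / k) : ℝ) : ℂ))) := by
      rw [map_sum]
      apply Finset.sum_congr rfl
      intro m _
      have hre : ((h:ℝ) * (x - (m:ℝ)^k) ^ ((1:ℝ)/k))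
          = -( |(h:ℝ)| * (x - (m:ℝ)^k) ^ ((1:ℝ)/k)) := by
        linear_combination ((x - (m:ℝ)^k) ^ ((1:ℝ)/k)) * habs
      rw [hre, ← Complex.exp_conj]
      congr 1
      simp only [map_mul, Complex.conj_I, Complex.conj_ofReal, map_ofNat]
      push_cast
      ring
    rw [hsum, RCLike.norm_conj]
    exact key
  · -- h > 0
    have hsum2 : ∑ m ∈ Finset.Ioc ⌊M⌋₊ ⌊min (2 * M) ((x / 2) ^ ((1 : ℝ) / k))⌋₊,
        Complex.exp (2 * Real.pi * Complex.I *
          (((h : ℝ) * (x - (m : ℝ) ^ k) ^ ((1 : ℝ) / k) : ℝ) : ℂ))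
        = ∑ m ∈ Finset.Ioc ⌊M⌋₊ ⌊min (2 * M) ((x / 2) ^ ((1 : ℝ) / k))⌋₊,
        Complex.exp (2 * Real.pi * Complex.I *
          ((|(h:ℝ)| * (x - (m : ℝ) ^ k) ^ ((1 : ℝ) / k) : ℝ) : ℂ)) := by
      apply Finset.sum_congr rfl
      intro m _
      have habs2 : |(h:ℝ)| = ((h:ℝ)) := abs_of_pos (by exact_mod_cast hpos)
      rw [show ((h:ℝ) * (x - (m:ℝ)^k) ^ ((1:ℝ)/k))
          = (|(h:ℝ)| * (x - (m:ℝ)^k) ^ ((1:ℝ)/k)) from by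
        linear_combination ((x - (m:ℝ)^k) ^ ((1:ℝ)/k)) * habs2.symm]
    rw [hsum2]
    exact key
end

section
/- Let k ≥ 4 be an integer, x > 0, h ≠ 0 an integer, and f(α) = h(x − α^k)^{1/k} for 0 < α < x^{1/k}. Then f''(α) = −(k−1) h x α^{k−2} (x − α^k)^{1/k − 2}, and for M ≤ α ≤ min(2M, (x/2)^{1/k}) one has (k−1)|h| x^{1/k − 1} M^{k−2} ≤ |f''(α)| ≤ 2^{k − 1/k} (k−1)|h| x^{1/k − 1} M^{k−2}. -/
open Real

lemma d2 (k : ℕ) (hk : 4 ≤ k) (x : ℝ) (hx : 0 < x) (h : ℤ) :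
    ∀ α ∈ Set.Ioo (0 : ℝ) (x ^ ((1 : ℝ) / k)),
      deriv (deriv (fun α : ℝ => (h : ℝ) * (x - α ^ k) ^ ((1 : ℝ) / k))) α =
        -((k : ℝ) - 1) * (h : ℝ) * x * α ^ (k - 2) * (x - α ^ k) ^ ((1 : ℝ) / k - 2) := by
  have hk0 : (k : ℝ) ≠ 0 := by positivity
  set c : ℝ := 1 / k with hc
  -- positivity of x - β^k on the interval
  have hu : ∀ β ∈ Set.Ioo (0 : ℝ) (x ^ c), 0 < x - β ^ k := by
    intro β hβ
    have hck : c * (k : ℝ) = 1 := by rw [hc]; field_simp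
    have hxk : (x ^ c) ^ k = x := by
      rw [← rpow_natCast (x ^ c) k, ← rpow_mul hx.le, hck, rpow_one]
    have : β ^ k < x := by
      calc β ^ k < (x ^ c) ^ k := pow_lt_pow_left₀ hβ.2 hβ.1.le (by omega)
        _ = x := hxk
    linarith
  -- first derivative
  have hd1 : ∀ β ∈ Set.Ioo (0 : ℝ) (x ^ c),
      HasDerivAt (fun α : ℝ => (h : ℝ) * (x - α ^ k) ^ c)
        (-(h : ℝ) * (β ^ (k - 1) * (x - β ^ k) ^ (c - 1))) β := by
    intro β hβ
    have hub := hu β hβ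
    have h1 : HasDerivAt (fun α : ℝ => x - α ^ k) (-((k : ℝ) * β ^ (k - 1))) β :=
      (hasDerivAt_pow k β).const_sub x
    have h2 : HasDerivAt (fun y : ℝ => (x - y ^ k) ^ c)
        (-((k : ℝ) * β ^ (k - 1)) * c * (x - β ^ k) ^ (c - 1)) β :=
      h1.rpow_const (Or.inl hub.ne')
    have h3 := h2.const_mul (h : ℝ)
    refine h3.congr_deriv ?_
    rw [hc]
    field_simp
  intro α hα
  have hg : deriv (deriv (fun α : ℝ => (h : ℝ) * (x - α ^ k) ^ c)) α =
      deriv (fun β : ℝ => -(h : ℝ) * (β ^ (k - 1) * (x - β ^ k) ^ (c - 1))) α := by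
    apply Filter.EventuallyEq.deriv_eq
    filter_upwards [isOpen_Ioo.mem_nhds hα] with β hβ
    exact (hd1 β hβ).deriv
  rw [hg]
  have hua := hu α hα
  have h1 : HasDerivAt (fun β : ℝ => β ^ (k - 1)) ((↑(k - 1) : ℝ) * α ^ (k - 1 - 1)) α :=
    hasDerivAt_pow (k - 1) α
  have h2 : HasDerivAt (fun β : ℝ => (x - β ^ k) ^ (c - 1))
      (-((k : ℝ) * α ^ (k - 1)) * (c - 1) * (x - α ^ k) ^ (c - 1 - 1)) α :=
    ((hasDerivAt_pow k α).const_sub x).rpow_const (Or.inl hua.ne')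
  have h3 := (h1.mul h2).const_mul (-(h : ℝ))
  rw [(show HasDerivAt (fun β : ℝ => -(h : ℝ) * (β ^ (k - 1) * (x - β ^ k) ^ (c - 1))) _ α from h3).deriv]
  -- algebraic identity
  have e1 : (x - α ^ k) ^ (c - 1) = (x - α ^ k) ^ (c - 1 - 1) * (x - α ^ k) := by
    rw [← rpow_add_one hua.ne']
    ring_nf
  obtain ⟨m, rfl⟩ : ∃ m, k = m + 4 := ⟨k - 4, by omega⟩
  have e2 : m + 4 - 1 = m + 3 := by omega
  have e3 : m + 4 - 2 = m + 2 := by omega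
  have e4 : m + 4 - 1 - 1 = m + 2 := by omega
  have e5 : c - 2 = c - 1 - 1 := by ring
  rw [e1, e4, e2, e3, e5]
  set X := (x - α ^ (m + 4)) ^ (c - 1 - 1) with hX
  have hcv : c = 1 / ((m : ℝ) + 4) := by rw [hc]; push_cast; ring
  rw [hcv]
  have hm : ((m : ℝ) + 4) ≠ 0 := by positivity
  push_cast
  field_simp
  ring

theorem stmt6 (k : ℕ) (hk : 4 ≤ k) (x : ℝ) (hx : 0 < x) (h : ℤ) (hh : h ≠ 0)
    (M : ℝ) (hM : 0 < M) (hM' : M ≤ (x / 2) ^ ((1 : ℝ) / k)) :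
    (∀ α ∈ Set.Ioo (0 : ℝ) (x ^ ((1 : ℝ) / k)),
      deriv (deriv (fun α : ℝ => (h : ℝ) * (x - α ^ k) ^ ((1 : ℝ) / k))) α =
        -((k : ℝ) - 1) * (h : ℝ) * x * α ^ (k - 2) * (x - α ^ k) ^ ((1 : ℝ) / k - 2)) ∧
    ∀ α ∈ Set.Icc M (min (2 * M) ((x / 2) ^ ((1 : ℝ) / k))),
      ((k : ℝ) - 1) * |(h : ℝ)| * x ^ ((1 : ℝ) / k - 1) * M ^ (k - 2) ≤
        |deriv (deriv (fun α : ℝ => (h : ℝ) * (x - α ^ k) ^ ((1 : ℝ) / k))) α| ∧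
      |deriv (deriv (fun α : ℝ => (h : ℝ) * (x - α ^ k) ^ ((1 : ℝ) / k))) α| ≤
        (2 : ℝ) ^ ((k : ℝ) - 1 / (k : ℝ)) * ((k : ℝ) - 1) * |(h : ℝ)| *
          x ^ ((1 : ℝ) / k - 1) * M ^ (k - 2) := by
  refine ⟨d2 k hk x hx h, ?_⟩
  intro α hα
  set p : ℝ := (1 : ℝ) / k with hp
  have hk0 : (k : ℝ) ≠ 0 := by positivity
  have hkR : (4 : ℝ) ≤ k := by exact_mod_cast hk
  have hα0 : 0 < α := lt_of_lt_of_le hM hα.1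
  have hα2M : α ≤ 2 * M := le_trans hα.2 (min_le_left _ _)
  have hαx2 : α ^ k ≤ x / 2 := by
    have h1 : α ≤ (x / 2) ^ p := le_trans hα.2 (min_le_right _ _)
    have h2 : ((x / 2) ^ p) ^ k = x / 2 := by
      rw [← rpow_natCast ((x / 2) ^ p) k, ← rpow_mul (by positivity)]
      rw [show p * (k : ℝ) = 1 by rw [hp]; field_simp, rpow_one]
    calc α ^ k ≤ ((x / 2) ^ p) ^ k := pow_le_pow_left₀ hα0.le h1 k
      _ = x / 2 := h2
  have hu : 0 < x - α ^ k := by linarith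
  have hux : x - α ^ k ≤ x := sub_le_self x (pow_pos hα0 k).le
  have hαlt : α < x ^ p := by
    have h2 : (x ^ p) ^ k = x := by
      rw [← rpow_natCast (x ^ p) k, ← rpow_mul hx.le]
      rw [show p * (k : ℝ) = 1 by rw [hp]; field_simp, rpow_one]
    have : α ^ k < (x ^ p) ^ k := by rw [h2]; linarith
    exact lt_of_pow_lt_pow_left₀ k (by positivity) this
  have hD := d2 k hk x hx h α ⟨hα0, hαlt⟩
  rw [hD]
  set u : ℝ := x - α ^ k with hud
  have habs : |(-((k : ℝ) - 1) * h * x * α ^ (k - 2) * u ^ (p - 2))| =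
      ((k : ℝ) - 1) * |(h : ℝ)| * (x * α ^ (k - 2) * u ^ (p - 2)) := by
    rw [abs_mul, abs_mul, abs_mul, abs_mul, abs_neg,
      abs_of_nonneg (by linarith : (0:ℝ) ≤ (k : ℝ) - 1), abs_of_nonneg hx.le,
      abs_of_nonneg (by positivity : (0:ℝ) ≤ α ^ (k - 2)),
      abs_of_nonneg (rpow_pos_of_pos hu _).le]
    ring
  rw [habs]
  have hxp1 : x ^ (p - 1) = x ^ (p - 2) * x := by
    rw [show p - 1 = (p - 2) + 1 by ring, rpow_add_one hx.ne']
  have hMα : M ^ (k - 2) ≤ α ^ (k - 2) := pow_le_pow_left₀ hM.le hα.1 _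
  constructor
  · have hxu : x ^ (p - 2) ≤ u ^ (p - 2) :=
      rpow_le_rpow_of_nonpos hu hux (by rw [hp]; nlinarith [one_div_le_one_div_of_le (by norm_num : (0:ℝ) < 4) hkR])
    calc ((k : ℝ) - 1) * |(h : ℝ)| * x ^ (p - 1) * M ^ (k - 2)
        = ((k : ℝ) - 1) * |(h : ℝ)| * x * (x ^ (p - 2) * M ^ (k - 2)) := by
          rw [hxp1]; ring
      _ ≤ ((k : ℝ) - 1) * |(h : ℝ)| * x * (u ^ (p - 2) * α ^ (k - 2)) := by
          apply mul_le_mul_of_nonneg_left _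
            (mul_nonneg (mul_nonneg (by linarith) (abs_nonneg _)) hx.le)
          exact mul_le_mul hxu hMα (by positivity) (by positivity)
      _ = ((k : ℝ) - 1) * |(h : ℝ)| * (x * α ^ (k - 2) * u ^ (p - 2)) := by ring
  · have hple : p - 2 ≤ 0 := by rw [hp]; nlinarith [one_div_le_one_div_of_le (by norm_num : (0:ℝ) < 4) hkR]
    have hux2 : u ^ (p - 2) ≤ (x / 2) ^ (p - 2) :=
      rpow_le_rpow_of_nonpos (by positivity) (by linarith) hple
    have hα2 : α ^ (k - 2) ≤ 2 ^ (k - 2) * M ^ (k - 2) := by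
      rw [← mul_pow]; exact pow_le_pow_left₀ hα0.le hα2M _
    have hx2 : (x / 2 : ℝ) ^ (p - 2) = x ^ (p - 2) * 2 ^ ((2 : ℝ) - p) := by
      rw [div_rpow hx.le (by norm_num), show (2:ℝ) - p = -(p - 2) by ring,
        rpow_neg (by norm_num : (0:ℝ) ≤ 2), div_eq_mul_inv]
    have hconst : (2 : ℝ) ^ ((k : ℝ) - 1 / k) = 2 ^ (k - 2) * 2 ^ ((2 : ℝ) - p) := by
      have : ((k : ℝ) - 1 / k) = ((k : ℝ) - 2) + ((2 : ℝ) - p) := by rw [hp]; ring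
      rw [this, rpow_add (by norm_num : (0:ℝ) < 2)]
      congr 1
      rw [← rpow_natCast (2:ℝ) (k - 2)]
      congr 1
      push_cast [Nat.cast_sub (by omega : 2 ≤ k)]
      ring
    calc ((k : ℝ) - 1) * |(h : ℝ)| * (x * α ^ (k - 2) * u ^ (p - 2))
        ≤ ((k : ℝ) - 1) * |(h : ℝ)| * (x * (2 ^ (k - 2) * M ^ (k - 2)) * ((x / 2) ^ (p - 2))) := by
          apply mul_le_mul_of_nonneg_left _ (mul_nonneg (by linarith) (abs_nonneg _))
          apply mul_le_mul (by apply mul_le_mul_of_nonneg_left hα2 hx.le) hux2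
            (by positivity) (by positivity)
      _ = (2 : ℝ) ^ ((k : ℝ) - 1 / k) * ((k : ℝ) - 1) * |(h : ℝ)| * x ^ (p - 1) * M ^ (k - 2) := by
          rw [hx2, hconst, hxp1]; ring
end

section
/- For an integer k ≥ 2 and real x > 0, 2∫_0^{(x/2)^{1/k}} (x − α^k)^{1/k} dα − (x/2)^{2/k} = ∫_0^{x^{1/k}} (x − α^k)^{1/k} dα = (1/k) B(1/k, 1/k + 1) x^{2/k}, where B is the Beta function. -/
open Real intervalIntegral

open MeasureTheory Set in
lemma realBetaAux {a b : ℝ} (ha : 0 < a) (hb : 0 < b) :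
    ∫ t in (0:ℝ)..1, t ^ (a - 1) * (1 - t) ^ (b - 1) =
      Real.Gamma a * Real.Gamma b / Real.Gamma (a + b) := by
  have key := Complex.Gamma_mul_Gamma_eq_betaIntegral
    (show 0 < (a : ℂ).re by simpa using ha) (show 0 < (b : ℂ).re by simpa using hb)
  have hcoe : Complex.betaIntegral a b =
      ((∫ t in (0:ℝ)..1, t ^ (a - 1) * (1 - t) ^ (b - 1) : ℝ) : ℂ) := by
    rw [Complex.betaIntegral, ← intervalIntegral.integral_ofReal]
    refine intervalIntegral.integral_congr_ae ?_
    filter_upwards with t ht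
    rw [Set.uIoc_of_le (by norm_num : (0:ℝ) ≤ 1)] at ht
    rw [Complex.ofReal_mul, Complex.ofReal_cpow ht.1.le,
      Complex.ofReal_cpow (by linarith [ht.2] : (0:ℝ) ≤ 1 - t)]
    push_cast
    ring
  rw [hcoe] at key
  have key2 : Real.Gamma a * Real.Gamma b =
      Real.Gamma (a + b) * ∫ t in (0:ℝ)..1, t ^ (a - 1) * (1 - t) ^ (b - 1) := by
    have h1 : ((a : ℂ) + b) = ((a + b : ℝ) : ℂ) := by push_cast; ring
    rw [h1, Complex.Gamma_ofReal, Complex.Gamma_ofReal, Complex.Gamma_ofReal] at key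
    exact_mod_cast key
  have hG : Real.Gamma (a + b) ≠ 0 := (Real.Gamma_pos_of_pos (by linarith)).ne'
  field_simp
  linarith [key2]

set_option maxHeartbeats 1000000 in
theorem stmt9 (k : ℕ) (hk : 2 ≤ k) (x : ℝ) (hx : 0 < x) :
    (2 * (∫ α in (0 : ℝ)..((x / 2) ^ ((1 : ℝ) / k)), (x - α ^ k) ^ ((1 : ℝ) / k)) -
        (x / 2) ^ ((2 : ℝ) / k) =
      ∫ α in (0 : ℝ)..(x ^ ((1 : ℝ) / k)), (x - α ^ k) ^ ((1 : ℝ) / k)) ∧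
    (∫ α in (0 : ℝ)..(x ^ ((1 : ℝ) / k)), (x - α ^ k) ^ ((1 : ℝ) / k)) =
      1 / (k : ℝ) * (Real.Gamma (1 / (k : ℝ)) * Real.Gamma (1 / (k : ℝ) + 1) /
        Real.Gamma (1 / (k : ℝ) + (1 / (k : ℝ) + 1))) * x ^ ((2 : ℝ) / k) := by
  have hk0 : (0:ℝ) < k := by positivity
  have hkne : (k:ℝ) ≠ 0 := hk0.ne'
  have h1k : (0:ℝ) < 1 / k := by positivity
  set c : ℝ := (x / 2) ^ ((1:ℝ)/k) with hc_def
  set r : ℝ := x ^ ((1:ℝ)/k) with hr_def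
  set g : ℝ → ℝ := fun α => (x - α ^ k) ^ ((1:ℝ)/k) with hg_def
  clear_value c r g
  have hpowinv : ∀ y : ℝ, 0 ≤ y → (y ^ ((1:ℝ)/k)) ^ k = y := by
    intro y hy
    rw [← Real.rpow_natCast (y ^ ((1:ℝ)/k)) k, ← Real.rpow_mul hy, one_div,
      inv_mul_cancel₀ hkne, Real.rpow_one]
  have hinvpow : ∀ y : ℝ, 0 ≤ y → ((y ^ k : ℝ)) ^ ((1:ℝ)/k) = y := by
    intro y hy
    rw [← Real.rpow_natCast y k, ← Real.rpow_mul hy, mul_one_div, div_self hkne, Real.rpow_one]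
  have hck : c ^ k = x / 2 := by rw [hc_def]; exact hpowinv _ (by linarith)
  have hrk : r ^ k = x := by rw [hr_def]; exact hpowinv _ hx.le
  have hc_pos : 0 < c := by rw [hc_def]; exact Real.rpow_pos_of_pos (by linarith) _
  have hr_pos : 0 < r := by rw [hr_def]; exact Real.rpow_pos_of_pos hx _
  have hcr : c < r := by
    rw [hc_def, hr_def]; exact Real.rpow_lt_rpow (by linarith) (by linarith) h1k
  -- continuity of g
  have hrpow_cont : Continuous fun t : ℝ => t ^ ((1:ℝ)/k) :=
    continuous_iff_continuousAt.2 fun t => Real.continuousAt_rpow_const t _ (Or.inr h1k.le)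
  have hcont : Continuous g := by
    rw [hg_def]; exact hrpow_cont.comp (continuous_const.sub (continuous_pow k))
  have hgint : ∀ a b : ℝ, IntervalIntegrable g MeasureTheory.volume a b :=
    fun a b => hcont.intervalIntegrable a b
  have hg0 : g 0 = r := by
    rw [hg_def, hr_def]
    simp only
    rw [zero_pow (by omega : k ≠ 0), sub_zero]
  have hgc : g c = c := by
    rw [hg_def]
    simp only [hck]
    rw [show x - x / 2 = x / 2 from by ring]
    exact hc_def.symm
  -- values on [0, c]
  have hbase : ∀ β ∈ Set.uIcc c 0, x / 2 ≤ x - β ^ k := by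
    intro β hβ
    rw [Set.uIcc_comm, Set.uIcc_of_le hc_pos.le] at hβ
    have : β ^ k ≤ c ^ k := pow_le_pow_left₀ hβ.1 hβ.2 k
    rw [hck] at this; linarith
  -- derivative of g on [0,c]
  set g' : ℝ → ℝ := fun β => -(k * β ^ (k-1)) * ((1:ℝ)/k) * (x - β ^ k) ^ ((1:ℝ)/k - 1)
    with hg'_def
  clear_value g'
  have hderiv : ∀ β ∈ Set.uIcc c 0, HasDerivAt g (g' β) β := by
    intro β hβ
    have hb : HasDerivAt (fun β : ℝ => x - β ^ k) (-(k * β ^ (k-1))) β :=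
      (hasDerivAt_pow k β).const_sub x
    have hne : x - β ^ k ≠ 0 := by have := hbase β hβ; linarith
    rw [hg_def, hg'_def]
    exact hb.rpow_const (p := (1:ℝ)/k) (Or.inl hne)
  have hg'cont : ContinuousOn g' (Set.uIcc c 0) := by
    intro β hβ
    have hne : x - β ^ k ≠ 0 := by have := hbase β hβ; linarith
    rw [hg'_def]
    refine ContinuousAt.continuousWithinAt ?_
    refine ContinuousAt.mul (by fun_prop) ?_
    exact ContinuousAt.rpow_const ((continuous_const.sub (continuous_pow k)).continuousAt)
      (Or.inl hne)
  -- change of variables on [c, 0]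
  have hsub : (∫ β in c..(0:ℝ), g' β • g (g β)) = ∫ α in c..r, g α := by
    have := intervalIntegral.integral_comp_smul_deriv hderiv hg'cont hcont
    rw [hgc, hg0] at this
    exact this
  -- involution
  have hinv : ∀ β ∈ Set.uIcc c 0, g (g β) = β := by
    intro β hβ
    have hb := hbase β hβ
    rw [Set.uIcc_comm, Set.uIcc_of_le hc_pos.le] at hβ
    rw [hg_def]
    simp only
    rw [hpowinv _ (show (0:ℝ) ≤ x - β ^ k by linarith), sub_sub_cancel]
    exact hinvpow β hβ.1
  have hsub' : (∫ β in c..(0:ℝ), β * g' β) = ∫ α in c..r, g α := by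
    rw [← hsub]
    refine intervalIntegral.integral_congr fun β hβ => ?_
    rw [hinv β hβ, smul_eq_mul, mul_comm]
  -- integration by parts
  have hparts : (∫ β in c..(0:ℝ), β * g' β)
      = 0 * g 0 - c * g c - ∫ β in c..(0:ℝ), 1 * g β := by
    exact intervalIntegral.integral_mul_deriv_eq_deriv_mul
      (fun β _ => hasDerivAt_id β) hderiv
      (intervalIntegrable_const) ((hg'cont.intervalIntegrable))
  have hsplit : (∫ α in (0:ℝ)..c, g α) + (∫ α in c..r, g α) = ∫ α in (0:ℝ)..r, g α :=
    intervalIntegral.integral_add_adjacent_intervals (hgint 0 c) (hgint c r)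
  have hcc : c * c = (x / 2) ^ ((2:ℝ)/k) := by
    rw [hc_def, ← Real.rpow_add (by linarith)]
    norm_num
    ring_nf
  have part1 : 2 * (∫ α in (0:ℝ)..c, g α) - (x/2) ^ ((2:ℝ)/k) = ∫ α in (0:ℝ)..r, g α := by
    have h2 : (∫ α in c..r, g α) = (∫ α in (0:ℝ)..c, g α) - c * c := by
      rw [← hsub', hparts, hgc]
      simp only [one_mul, zero_mul, intervalIntegral.integral_symm c 0]
      ring
    rw [← hsplit, h2, ← hcc]; ring
  -- Part 2 : the Beta evaluation
  set J : ℝ → ℝ := fun u => u ^ ((1:ℝ)/k - 1) * (1 - u) ^ ((1:ℝ)/k) with hJ_def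
  clear_value J
  have hJint : ∀ a b : ℝ, IntervalIntegrable J MeasureTheory.volume a b := by
    intro a b
    rw [hJ_def]
    exact (intervalIntegral.intervalIntegrable_rpow' (by simpa using h1k)).mul_continuousOn
      ((hrpow_cont.comp (continuous_const.sub continuous_id)).continuousOn)
  set φ : ℝ → ℝ := fun α => α ^ k / x with hφ_def
  set φ' : ℝ → ℝ := fun α => k * α ^ (k-1) / x with hφ'_def
  clear_value φ φ'
  have hφd : ∀ α : ℝ, HasDerivAt φ (φ' α) α := by
    intro α
    rw [hφ_def, hφ'_def]
    exact ((hasDerivAt_pow k α).div_const x)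
  have hC : ∀ α ∈ Set.Ioc 0 r, φ' α • J (φ α)
      = ((k : ℝ) * x ^ (-(2:ℝ)/k)) * g α := by
    intro α hα
    have hα0 : 0 < α := hα.1
    have hαx : α ^ k ≤ x := by
      have : α ^ k ≤ r ^ k := pow_le_pow_left₀ hα0.le hα.2 k
      rwa [hrk] at this
    rw [hφ_def, hφ'_def, hJ_def, hg_def]
    simp only [smul_eq_mul]
    have e1 : ((1:ℝ) - α ^ k / x) = (x - α ^ k) / x := by field_simp
    have e2 : ((x - α ^ k) / x) ^ ((1:ℝ)/k)
        = (x - α ^ k) ^ ((1:ℝ)/k) / x ^ ((1:ℝ)/k) := Real.div_rpow (by linarith) hx.le _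
    have e3 : ((α:ℝ) ^ k / x) ^ ((1:ℝ)/k - 1)
        = ((α:ℝ) ^ k) ^ ((1:ℝ)/k - 1) / x ^ ((1:ℝ)/k - 1) :=
      Real.div_rpow (by positivity) hx.le _
    have e4 : ((α:ℝ) ^ k) ^ ((1:ℝ)/k - 1) = α * (α ^ k)⁻¹ := by
      rw [← Real.rpow_natCast α k, ← Real.rpow_mul hα0.le,
        show (k:ℝ) * ((1:ℝ)/k - 1) = 1 - k from by field_simp,
        Real.rpow_sub hα0, Real.rpow_one, Real.rpow_natCast, div_eq_mul_inv]
    have e5 : x ^ ((1:ℝ)/k - 1) = x ^ ((1:ℝ)/k) * x⁻¹ := by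
      rw [Real.rpow_sub hx, Real.rpow_one, div_eq_mul_inv]
    have e6 : x ^ (-(2:ℝ)/k) = (x ^ ((1:ℝ)/k))⁻¹ * (x ^ ((1:ℝ)/k))⁻¹ := by
      rw [show (-(2:ℝ)/k) = -((1:ℝ)/k) + -((1:ℝ)/k) from by ring, Real.rpow_add hx,
        Real.rpow_neg hx.le]
    have e7 : α ^ (k - 1) * α = α ^ k := by
      rw [← pow_succ]; congr 1; omega
    rw [e1, e2, e3, e4, e5, e6]
    have hxk : x ^ ((1:ℝ)/k) ≠ 0 := by
      rw [← hr_def]; exact hr_pos.ne'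
    have hαk : α ^ k ≠ 0 := by positivity
    field_simp
    rw [← e7]
  have hae0 : ∀ᵐ α : ℝ, α ≠ (0:ℝ) := by
    refine MeasureTheory.ae_iff.2 ?_
    simp only [ne_eq, not_not]
    rw [show {α : ℝ | α = 0} = ({0} : Set ℝ) from by ext y; simp]
    exact Real.volume_singleton
  have hIoc : Set.uIoc (0:ℝ) r = Set.Ioc 0 r := Set.uIoc_of_le hr_pos.le
  have hmain : ((k : ℝ) * x ^ (-(2:ℝ)/k)) * (∫ α in (0:ℝ)..r, g α)
      = ∫ u in (0:ℝ)..1, J u := by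
    rw [← intervalIntegral.integral_const_mul]
    have hL : (∫ α in (0:ℝ)..r, ((k : ℝ) * x ^ (-(2:ℝ)/k)) * g α)
        = ∫ α in (0:ℝ)..r, φ' α • J (φ α) := by
      refine intervalIntegral.integral_congr_ae ?_
      filter_upwards with α hα
      rw [hIoc] at hα
      exact (hC α hα).symm
    rw [hL]
    have h01 : φ 0 = 0 := by rw [hφ_def]; simp [zero_pow (by omega : k ≠ 0)]
    have h1r : φ r = 1 := by rw [hφ_def]; simp only; rw [hrk, div_self hx.ne']
    have hφc : Continuous φ := by rw [hφ_def]; exact (continuous_pow k).div_const x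
    have key : (∫ α in (0:ℝ)..r, φ' α • (J ∘ φ) α) = ∫ u in (φ 0)..(φ r), J u := by
      refine intervalIntegral.integral_comp_smul_deriv''' hφc.continuousOn ?_ ?_ ?_ ?_
      · intro α _
        exact (hφd α).hasDerivWithinAt
      · intro u hu
        rw [show min 0 r = 0 from min_eq_left hr_pos.le,
          show max 0 r = r from max_eq_right hr_pos.le] at hu
        obtain ⟨α, hα, rfl⟩ := hu
        have hα0 : 0 < α := hα.1
        have hφα : 0 < φ α := by rw [hφ_def]; simp only; positivity
        refine ContinuousAt.continuousWithinAt ?_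
        rw [hJ_def]
        refine ContinuousAt.mul ?_ ?_
        · exact Real.continuousAt_rpow_const _ _ (Or.inl hφα.ne')
        · exact (hrpow_cont.comp (continuous_const.sub continuous_id)).continuousAt
      · refine MeasureTheory.IntegrableOn.mono_set (t := Set.uIcc 0 1) ?_ ?_
        · rw [← intervalIntegrable_iff'] ; exact hJint 0 1
        · rw [Set.uIcc_of_le hr_pos.le, Set.uIcc_of_le zero_le_one]
          rintro u ⟨α, hα, rfl⟩
          rw [Set.mem_Icc] at hα
          rw [hφ_def]
          simp only [Set.mem_Icc]
          constructor
          · exact div_nonneg (pow_nonneg hα.1 k) hx.le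
          · rw [div_le_one hx]
            calc α ^ k ≤ r ^ k := pow_le_pow_left₀ hα.1 hα.2 k
            _ = x := hrk
      · -- integrability of φ' • J ∘ φ
        have heq : (fun α => φ' α • (J ∘ φ) α)
            =ᵐ[MeasureTheory.volume.restrict (Set.uIcc 0 r)]
            (fun α => ((k : ℝ) * x ^ (-(2:ℝ)/k)) * g α) := by
          have h1 : ∀ᵐ α ∂(MeasureTheory.volume.restrict (Set.uIcc (0:ℝ) r)),
              α ∈ Set.uIcc (0:ℝ) r := MeasureTheory.ae_restrict_mem measurableSet_uIcc
          have h2 : ∀ᵐ α ∂(MeasureTheory.volume.restrict (Set.uIcc (0:ℝ) r)),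
              α ≠ (0:ℝ) := MeasureTheory.ae_restrict_of_ae hae0
          filter_upwards [h1, h2] with α hα hα0
          rw [Set.uIcc_of_le hr_pos.le] at hα
          exact hC α ⟨lt_of_le_of_ne hα.1 (Ne.symm hα0), hα.2⟩
        refine MeasureTheory.Integrable.congr ?_ heq.symm
        exact (intervalIntegrable_iff' (μ := MeasureTheory.volume) (a := 0) (b := r)
          (f := fun α => ((k : ℝ) * x ^ (-(2:ℝ)/k)) * g α)).mp ((hgint 0 r).const_mul _)
    calc (∫ α in (0:ℝ)..r, φ' α • J (φ α)) = ∫ α in (0:ℝ)..r, φ' α • (J ∘ φ) α := rfl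
      _ = ∫ u in (φ 0)..(φ r), J u := key
      _ = ∫ u in (0:ℝ)..1, J u := by rw [h01, h1r]
  have hbeta : (∫ u in (0:ℝ)..1, J u)
      = Real.Gamma (1/(k:ℝ)) * Real.Gamma (1/(k:ℝ) + 1)
        / Real.Gamma (1/(k:ℝ) + (1/(k:ℝ) + 1)) := by
    have := realBetaAux (a := 1/(k:ℝ)) (b := 1/(k:ℝ) + 1) h1k (by linarith)
    simp only [add_sub_cancel_right] at this
    rw [hJ_def]
    convert this using 1
  have hxx : x ^ (-(2:ℝ)/k) * x ^ ((2:ℝ)/k) = 1 := by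
    rw [← Real.rpow_add hx, show (-(2:ℝ)/k + 2/k) = 0 from by ring, Real.rpow_zero]
  have part2 : (∫ α in (0:ℝ)..r, g α)
      = 1 / (k : ℝ) * (Real.Gamma (1/(k:ℝ)) * Real.Gamma (1/(k:ℝ) + 1)
        / Real.Gamma (1/(k:ℝ) + (1/(k:ℝ) + 1))) * x ^ ((2:ℝ)/k) := by
    have h := hmain.trans hbeta
    have h2 : x ^ ((2:ℝ)/k) * x ^ (-(2:ℝ)/k) = 1 := by rw [mul_comm]; exact hxx
    have hunit : (1/(k:ℝ) * x ^ ((2:ℝ)/k)) * ((k:ℝ) * x ^ (-(2:ℝ)/k)) = 1 := by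
      calc (1/(k:ℝ) * x ^ ((2:ℝ)/k)) * ((k:ℝ) * x ^ (-(2:ℝ)/k))
          = (1/(k:ℝ) * k) * (x ^ ((2:ℝ)/k) * x ^ (-(2:ℝ)/k)) := by ring
        _ = 1 := by rw [h2, one_div, inv_mul_cancel₀ hkne, one_mul]
    calc (∫ α in (0:ℝ)..r, g α) = 1 * ∫ α in (0:ℝ)..r, g α := (one_mul _).symm
      _ = ((1/(k:ℝ) * x ^ ((2:ℝ)/k)) * ((k:ℝ) * x ^ (-(2:ℝ)/k))) * ∫ α in (0:ℝ)..r, g α := by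
          rw [hunit]
      _ = (1/(k:ℝ)) * x ^ ((2:ℝ)/k)
          * (((k:ℝ) * x ^ (-(2:ℝ)/k)) * ∫ α in (0:ℝ)..r, g α) := by ring
      _ = (1/(k:ℝ)) * x ^ ((2:ℝ)/k) * (Real.Gamma (1/(k:ℝ)) * Real.Gamma (1/(k:ℝ) + 1)
            / Real.Gamma (1/(k:ℝ) + (1/(k:ℝ) + 1))) := by rw [h]
      _ = 1 / (k : ℝ) * (Real.Gamma (1/(k:ℝ)) * Real.Gamma (1/(k:ℝ) + 1)
            / Real.Gamma (1/(k:ℝ) + (1/(k:ℝ) + 1))) * x ^ ((2:ℝ)/k) := by ring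
  exact ⟨part1, part2⟩
end
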